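/- arXiv:2002.03430 — 5 statements merged into one kernel-verified Lean document; each statement's English description precedes it below -/
import Mathlib

section
/- For every $w \in \mathbb{C}$, the integral $\int_{|z|>1} \left|\frac{w^2}{z^2(w-z)}\right| \, d\sigma_z$ (with respect to planar Lebesgue measure $\sigma$) is finite and satisfies the bound $\int_{|z|>1} \left|\frac{w^2}{z^2(w-z)}\right| d\sigma_z \le C\,|w|\,(1+\ln^+|w|)$ for some absolute constant $C>0$ independent of $w$, where $\ln^+ t = \max\{0, \ln t\}$. -/
open MeasureTheory Real Set Metric

lemma radial_integrable {f : ℝ → ℝ} (hf : IntegrableOn (fun y => y * f y) (Ioi 0)) :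
    Integrable (fun z : ℂ => f ‖z‖) := by
  have h0 : IntegrableOn (fun y : ℝ => f y * y) (Ioi 0) := hf.congr_fun (fun y _ => mul_comm y (f y)) measurableSet_Ioi
  rw [IntegrableOn, ← map_comap_subtype_coe measurableSet_Ioi,
    (MeasurableEmbedding.subtype_coe measurableSet_Ioi).integrable_map_iff] at h0
  have h1 : Integrable (fun y : Ioi (0:ℝ) => f y) (Measure.volumeIoiPow 1) := by
    rw [Measure.volumeIoiPow, integrable_withDensity_iff]
    · apply h0.congr
      filter_upwards with y
      simp only [Function.comp]
      rw [pow_one, ENNReal.toReal_ofReal y.2.out.le]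
    · exact (measurable_subtype_coe.pow_const _).ennreal_ofReal
    · filter_upwards with y using ENNReal.ofReal_lt_top
  have h2 : Integrable (fun p : sphere (0:ℂ) 1 × Ioi (0:ℝ) => f p.2)
      ((volume : Measure ℂ).toSphere.prod (Measure.volumeIoiPow 1)) := by
    have := (integrable_const (1:ℝ) (μ := (volume : Measure ℂ).toSphere)).smul_prod h1
    simpa using this
  have dimtwo : Module.finrank ℝ ℂ = 2 := Complex.finrank_real_complex
  have h3 : Integrable ((fun p : sphere (0:ℂ) 1 × Ioi (0:ℝ) => f p.2) ∘ (homeomorphUnitSphereProd ℂ))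
      ((volume : Measure ℂ).comap (↑)) := by
    refine (((volume : Measure ℂ).measurePreserving_homeomorphUnitSphereProd).integrable_comp_emb
      (Homeomorph.measurableEmbedding _)).mpr ?_
    rw [dimtwo]
    exact h2
  have h4 : IntegrableOn (fun z : ℂ => f ‖z‖) ({0}ᶜ : Set ℂ) := by
    rw [IntegrableOn, ← map_comap_subtype_coe (measurableSet_singleton (0:ℂ)).compl,
      (MeasurableEmbedding.subtype_coe (measurableSet_singleton (0:ℂ)).compl).integrable_map_iff]
    refine h3.congr (Filter.Eventually.of_forall fun x => ?_)
    show f (‖x.1‖ / 1) = f ‖x.1‖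
    rw [div_one]
  rwa [IntegrableOn, MeasureTheory.restrict_compl_singleton] at h4

lemma radial_integral (f : ℝ → ℝ) :
    ∫ z : ℂ, f ‖z‖ = 2 * π * ∫ y in Ioi (0:ℝ), y * f y := by
  have := integral_fun_norm_addHaar (volume : Measure ℂ) f
  rw [Complex.finrank_real_complex] at this
  rw [this, measureReal_def, Complex.volume_ball]
  have e1 : ∫ y in Ioi (0:ℝ), y ^ (2-1) • f y = ∫ y in Ioi (0:ℝ), y * f y :=
    setIntegral_congr_fun measurableSet_Ioi fun y _ => by norm_num
  rw [e1, nsmul_eq_mul, smul_eq_mul, ENNReal.toReal_mul]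
  norm_num [NNReal.coe_real_pi]
  ring


noncomputable def fA (R : ℝ) : ℝ → ℝ := (Iio R).indicator (fun y => y⁻¹)
noncomputable def fB (T : ℝ) : ℝ → ℝ := (Ioc 1 T).indicator (fun y => (y^2)⁻¹)
noncomputable def fC (T : ℝ) : ℝ → ℝ := (Ioi T).indicator (fun y => (y^3)⁻¹)

lemma fA_nonneg {R x : ℝ} (hx : 0 ≤ x) : 0 ≤ fA R x := by
  unfold fA; rw [indicator_apply]; split_ifs
  exacts [inv_nonneg.mpr hx, le_refl 0]
lemma fB_nonneg {T x : ℝ} (hx : 0 ≤ x) : 0 ≤ fB T x := by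
  unfold fB; rw [indicator_apply]; split_ifs <;> positivity
lemma fC_nonneg {T x : ℝ} (hx : 0 ≤ x) : 0 ≤ fC T x := by
  unfold fC; rw [indicator_apply]; split_ifs
  exacts [inv_nonneg.mpr (by positivity), le_refl 0]

lemma rpow_neg_two_eq {x : ℝ} (hx : 0 < x) : x ^ (-2:ℝ) = (x^2)⁻¹ := by
  have h2 : ((2:ℕ):ℝ) = 2 := by norm_num
  rw [rpow_neg hx.le, ← h2, rpow_natCast]

lemma oneA {R : ℝ} (hR : 0 ≤ R) :
    IntegrableOn (fun y => y * fA R y) (Ioi 0) ∧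
      ∫ y in Ioi (0:ℝ), y * fA R y = R := by
  have heq : EqOn (fun y => y * fA R y) ((Iio R).indicator (fun _ => (1:ℝ))) (Ioi 0) := by
    intro y hy
    have hy0 : y ≠ 0 := ne_of_gt hy
    by_cases h : y ∈ Iio R
    · simp only [fA, indicator_of_mem h, mul_inv_cancel₀ hy0]
    · simp [fA, indicator_of_notMem h]
  have hind : IntegrableOn ((Iio R).indicator (fun _ => (1:ℝ))) (Ioi 0) := by
    rw [IntegrableOn, integrable_indicator_iff measurableSet_Iio]
    refine (integrableOn_const_iff (C := (1:ℝ))).mpr (Or.inr ?_)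
    rw [Measure.restrict_apply measurableSet_Iio, Iio_inter_Ioi, Real.volume_Ioo]
    exact ENNReal.ofReal_lt_top
  refine ⟨hind.congr_fun (fun y hy => (heq hy).symm) measurableSet_Ioi, ?_⟩
  rw [setIntegral_congr_fun measurableSet_Ioi heq,
    setIntegral_indicator measurableSet_Iio, setIntegral_const]
  rw [Ioi_inter_Iio, Real.volume_real_Ioo_of_le hR]
  simp

lemma oneB {T : ℝ} (hT : 1 ≤ T) :
    IntegrableOn (fun y => y * fB T y) (Ioi 0) ∧
      ∫ y in Ioi (0:ℝ), y * fB T y = Real.log T := by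
  have heq : EqOn (fun y => y * fB T y) ((Ioc 1 T).indicator (fun y => y⁻¹)) (Ioi 0) := by
    intro y hy
    have hy0 : y ≠ 0 := ne_of_gt hy
    by_cases h : y ∈ Ioc 1 T
    · simp only [fB, indicator_of_mem h]
      field_simp
    · simp [fB, indicator_of_notMem h]
  have hinv : IntegrableOn (fun y : ℝ => y⁻¹) (Ioc 1 T) := by
    have hc : ContinuousOn (fun y : ℝ => y⁻¹) (uIcc 1 T) := by
      apply continuousOn_id.inv₀
      intro x hx
      rw [uIcc_of_le hT] at hx
      exact ne_of_gt (lt_of_lt_of_le zero_lt_one hx.1)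
    have h : IntervalIntegrable (fun y : ℝ => y⁻¹) volume 1 T := hc.intervalIntegrable
    rwa [intervalIntegrable_iff_integrableOn_Ioc_of_le hT] at h
  have hind : IntegrableOn ((Ioc 1 T).indicator (fun y : ℝ => y⁻¹)) (Ioi 0) := by
    rw [IntegrableOn, integrable_indicator_iff measurableSet_Ioc]
    exact hinv.restrict
  refine ⟨hind.congr_fun (fun y hy => (heq hy).symm) measurableSet_Ioi, ?_⟩
  rw [setIntegral_congr_fun measurableSet_Ioi heq,
    setIntegral_indicator measurableSet_Ioc]
  have h1 : Ioi (0:ℝ) ∩ Ioc 1 T = Ioc 1 T :=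
    inter_eq_self_of_subset_right (fun x hx => lt_trans zero_lt_one hx.1)
  have h0 : (0:ℝ) ∉ uIcc 1 T := by
    rw [uIcc_of_le hT]; rintro ⟨h1', -⟩; linarith
  rw [h1, ← intervalIntegral.integral_of_le hT, integral_inv h0, div_one]

lemma oneC {T : ℝ} (hT : 0 < T) :
    IntegrableOn (fun y => y * fC T y) (Ioi 0) ∧
      ∫ y in Ioi (0:ℝ), y * fC T y = T⁻¹ := by
  have heq : EqOn (fun y => y * fC T y) ((Ioi T).indicator (fun y => (y^2)⁻¹)) (Ioi 0) := by
    intro y hy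
    have hy0 : y ≠ 0 := ne_of_gt hy
    by_cases h : y ∈ Ioi T
    · simp only [fC, indicator_of_mem h]
      field_simp
    · simp [fC, indicator_of_notMem h]
  have hpow : IntegrableOn (fun y : ℝ => (y^2)⁻¹) (Ioi T) := by
    have h := integrableOn_Ioi_rpow_of_lt (show (-2:ℝ) < -1 by norm_num) hT
    apply h.congr_fun ?_ measurableSet_Ioi
    intro x hx
    exact rpow_neg_two_eq (lt_trans hT hx)
  have hind : IntegrableOn ((Ioi T).indicator (fun y : ℝ => (y^2)⁻¹)) (Ioi 0) := by
    rw [IntegrableOn, integrable_indicator_iff measurableSet_Ioi]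
    exact hpow.restrict
  refine ⟨hind.congr_fun (fun y hy => (heq hy).symm) measurableSet_Ioi, ?_⟩
  rw [setIntegral_congr_fun measurableSet_Ioi heq,
    setIntegral_indicator measurableSet_Ioi]
  have h1 : Ioi (0:ℝ) ∩ Ioi T = Ioi T :=
    inter_eq_self_of_subset_right (Ioi_subset_Ioi hT.le)
  have h2 : ∫ y in Ioi T, (y^2)⁻¹ = ∫ y in Ioi T, y ^ (-2:ℝ) :=
    setIntegral_congr_fun measurableSet_Ioi fun x hx => (rpow_neg_two_eq (lt_trans hT hx)).symm
  rw [h1, h2, integral_Ioi_rpow_of_lt (by norm_num) hT,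
    show (-2:ℝ) + 1 = -1 by norm_num, rpow_neg_one]
  field_simp


lemma planeA {R : ℝ} (hR : 0 ≤ R) :
    Integrable (fun z : ℂ => fA R ‖z‖) ∧ ∫ z : ℂ, fA R ‖z‖ = 2*π*R :=
  ⟨radial_integrable (oneA hR).1, by rw [radial_integral, (oneA hR).2]⟩

lemma planeB {T : ℝ} (hT : 1 ≤ T) :
    Integrable (fun z : ℂ => fB T ‖z‖) ∧ ∫ z : ℂ, fB T ‖z‖ = 2*π*Real.log T :=
  ⟨radial_integrable (oneB hT).1, by rw [radial_integral, (oneB hT).2]⟩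

lemma planeC {T : ℝ} (hT : 0 < T) :
    Integrable (fun z : ℂ => fC T ‖z‖) ∧ ∫ z : ℂ, fC T ‖z‖ = 2*π*T⁻¹ :=
  ⟨radial_integrable (oneC hT).1, by rw [radial_integral, (oneC hT).2]⟩

/-- For every `w ∈ ℂ`, the integral `∫_{|z|>1} |w² / (z²(w-z))| dσ_z` (planar Lebesgue
measure) is finite and bounded by `C·|w|·(1 + ln⁺|w|)` for an absolute constant `C > 0`. -/
theorem stmt0 :
    ∃ C : ℝ, 0 < C ∧ ∀ w : ℂ,
      IntegrableOn (fun z : ℂ => ‖w ^ 2 / (z ^ 2 * (w - z))‖) {z : ℂ | 1 < ‖z‖} volume ∧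
      (∫ z in {z : ℂ | 1 < ‖z‖}, ‖w ^ 2 / (z ^ 2 * (w - z))‖ ∂volume)
        ≤ C * ‖w‖ * (1 + max 0 (Real.log ‖w‖)) := by
  refine ⟨50, by norm_num, fun w => ?_⟩
  by_cases hw : w = 0
  · subst hw
    simp only [norm_zero]
    constructor
    · apply (integrable_zero _ _ _).integrableOn.congr_fun ?_
        (measurableSet_lt measurable_const measurable_norm)
      intro z _
      simp
    · have : ∀ z : ℂ, ‖(0:ℂ) ^ 2 / (z ^ 2 * (0 - z))‖ = 0 := by intro z; simp
      rw [setIntegral_congr_fun (measurableSet_lt measurable_const measurable_norm)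
        (fun z _ => this z)]
      simp [Real.log_zero]
  -- main case
  set nw : ℝ := ‖w‖ with hnwdef
  have hnw : 0 < nw := norm_pos_iff.mpr hw
  set R : ℝ := nw / 2 with hRdef
  have hR0 : 0 ≤ R := by positivity
  set T : ℝ := max 1 (2 * nw) with hTdef
  have hT1 : 1 ≤ T := le_max_left _ _
  have hT0 : 0 < T := lt_of_lt_of_le one_pos hT1
  have hT2 : 2 * nw ≤ T := le_max_right _ _
  set M : ℂ → ℝ := fun z => 4 * fA R ‖z - w‖ + 2 * nw * fB T ‖z‖ + 2 * nw ^ 2 * fC T ‖z‖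
    with hMdef
  have pA : Integrable (fun z : ℂ => fA R ‖z - w‖) := (planeA hR0).1.comp_sub_right w
  have hMint : Integrable M :=
    ((pA.const_mul 4).add ((planeB hT1).1.const_mul (2 * nw))).add
      ((planeC hT0).1.const_mul (2 * nw ^ 2))
  have hMnonneg : ∀ z, 0 ≤ M z := by
    intro z
    have t1 := fA_nonneg (R := R) (norm_nonneg (z - w))
    have t2 := fB_nonneg (T := T) (norm_nonneg z)
    have t3 := fC_nonneg (T := T) (norm_nonneg z)
    have h2 : (0:ℝ) ≤ 2 * nw := by positivity
    have h3 : (0:ℝ) ≤ 2 * nw ^ 2 := by positivity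
    simp only [hMdef]
    have := mul_nonneg h2 t2
    have := mul_nonneg h3 t3
    have := mul_nonneg (by norm_num : (0:ℝ) ≤ 4) t1
    linarith
  have hS : MeasurableSet {z : ℂ | 1 < ‖z‖} :=
    measurableSet_lt measurable_const measurable_norm
  have hgeq : ∀ z : ℂ, ‖w ^ 2 / (z ^ 2 * (w - z))‖ = nw ^ 2 / (‖z‖ ^ 2 * ‖w - z‖) := by
    intro z
    rw [norm_div, norm_mul, norm_pow, norm_pow]
  have hbound : ∀ z ∈ {z : ℂ | 1 < ‖z‖}, ‖w ^ 2 / (z ^ 2 * (w - z))‖ ≤ M z := by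
    intro z hz
    simp only [mem_setOf_eq] at hz
    rw [hgeq z]
    have hz0 : (0:ℝ) < ‖z‖ := lt_trans one_pos hz
    have hwz : ‖w - z‖ = ‖z - w‖ := norm_sub_rev w z
    have t1 := fA_nonneg (R := R) (norm_nonneg (z - w))
    have t2 := fB_nonneg (T := T) (norm_nonneg z)
    have t3 := fC_nonneg (T := T) (norm_nonneg z)
    by_cases hzw : ‖z - w‖ < R
    · have hA : fA R ‖z - w‖ = ‖z - w‖⁻¹ := by unfold fA; exact indicator_of_mem (show ‖z - w‖ ∈ Iio R from hzw) (fun y => y⁻¹)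
      have hzbig : nw / 2 ≤ ‖z‖ := by
        have h2 : nw ≤ ‖z‖ + ‖z - w‖ := by
          calc nw = ‖z - (z - w)‖ := by rw [sub_sub_cancel]
          _ ≤ ‖z‖ + ‖z - w‖ := norm_sub_le _ _
        simp only [hRdef] at hzw
        linarith
      have hMge : 4 * ‖z - w‖⁻¹ ≤ M z := by
        simp only [hMdef, hA]
        have := mul_nonneg (by positivity : (0:ℝ) ≤ 2 * nw) t2
        have := mul_nonneg (by positivity : (0:ℝ) ≤ 2 * nw ^ 2) t3
        linarith
      refine le_trans ?_ hMge
      rcases eq_or_lt_of_le (norm_nonneg (z - w)) with h0 | h0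
      · rw [hwz, ← h0]
        simp
      · rw [hwz]
        calc nw ^ 2 / (‖z‖ ^ 2 * ‖z - w‖) ≤ nw ^ 2 / (nw ^ 2 / 4 * ‖z - w‖) := by
              apply div_le_div_of_nonneg_left (by positivity) (by positivity)
              apply mul_le_mul_of_nonneg_right ?_ h0.le
              nlinarith
        _ = 4 * ‖z - w‖⁻¹ := by
              field_simp [hnw.ne', h0.ne']
    · push_neg at hzw
      have hfar : nw / 2 ≤ ‖w - z‖ := by rw [hwz]; simpa [hRdef] using hzw
      by_cases hTz : ‖z‖ ≤ T
      · have hB : fB T ‖z‖ = (‖z‖ ^ 2)⁻¹ := by unfold fB; exact indicator_of_mem (mem_Ioc.mpr ⟨hz, hTz⟩) (fun y => (y^2)⁻¹)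
        have hMge : 2 * nw * (‖z‖ ^ 2)⁻¹ ≤ M z := by
          simp only [hMdef, hB]
          have := mul_nonneg (by norm_num : (0:ℝ) ≤ 4) t1
          have := mul_nonneg (by positivity : (0:ℝ) ≤ 2 * nw ^ 2) t3
          linarith
        refine le_trans ?_ hMge
        calc nw ^ 2 / (‖z‖ ^ 2 * ‖w - z‖) ≤ nw ^ 2 / (‖z‖ ^ 2 * (nw / 2)) := by
              apply div_le_div_of_nonneg_left (by positivity) (by positivity)
              exact mul_le_mul_of_nonneg_left hfar (by positivity)
        _ = 2 * nw * (‖z‖ ^ 2)⁻¹ := by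
              rw [div_eq_iff (ne_of_gt (by positivity : (0:ℝ) < ‖z‖ ^ 2 * (nw / 2)))]
              have hcan : 2 * nw * (‖z‖ ^ 2)⁻¹ * (‖z‖ ^ 2 * (nw / 2))
                  = nw ^ 2 * ((‖z‖ ^ 2)⁻¹ * ‖z‖ ^ 2) := by ring
              rw [hcan, inv_mul_cancel₀ (ne_of_gt (by positivity : (0:ℝ) < ‖z‖ ^ 2)), mul_one]
      · push_neg at hTz
        have hC : fC T ‖z‖ = (‖z‖ ^ 3)⁻¹ := by unfold fC; exact indicator_of_mem (mem_Ioi.mpr hTz) (fun y => (y^3)⁻¹)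
        have hz2 : 2 * nw < ‖z‖ := lt_of_le_of_lt hT2 hTz
        have hfar2 : ‖z‖ / 2 ≤ ‖w - z‖ := by
          have h3 : ‖z‖ - nw ≤ ‖z - w‖ := by
            have := norm_sub_norm_le z w
            linarith [this]
          rw [hwz]
          linarith
        have hMge : 2 * nw ^ 2 * (‖z‖ ^ 3)⁻¹ ≤ M z := by
          simp only [hMdef, hC]
          have := mul_nonneg (by norm_num : (0:ℝ) ≤ 4) t1
          have := mul_nonneg (by positivity : (0:ℝ) ≤ 2 * nw) t2
          linarith
        refine le_trans ?_ hMge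
        calc nw ^ 2 / (‖z‖ ^ 2 * ‖w - z‖) ≤ nw ^ 2 / (‖z‖ ^ 2 * (‖z‖ / 2)) := by
              apply div_le_div_of_nonneg_left (by positivity) (by positivity)
              exact mul_le_mul_of_nonneg_left hfar2 (by positivity)
        _ = 2 * nw ^ 2 * (‖z‖ ^ 3)⁻¹ := by
              field_simp [hnw.ne', hz0.ne']
  have hmeas : AEStronglyMeasurable (fun z : ℂ => ‖w ^ 2 / (z ^ 2 * (w - z))‖)
      (volume.restrict {z : ℂ | 1 < ‖z‖}) := by
    apply Measurable.aestronglyMeasurable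
    fun_prop
  have hInt : IntegrableOn (fun z : ℂ => ‖w ^ 2 / (z ^ 2 * (w - z))‖) {z : ℂ | 1 < ‖z‖} := by
    apply Integrable.mono' hMint.integrableOn hmeas
    filter_upwards [ae_restrict_mem hS] with z hz
    rw [Real.norm_eq_abs, abs_of_nonneg (norm_nonneg _)]
    exact hbound z hz
  refine ⟨hInt, ?_⟩
  have step1 : (∫ z in {z : ℂ | 1 < ‖z‖}, ‖w ^ 2 / (z ^ 2 * (w - z))‖ ∂volume)
      ≤ ∫ z in {z : ℂ | 1 < ‖z‖}, M z ∂volume :=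
    setIntegral_mono_on hInt hMint.integrableOn hS hbound
  have step2 : (∫ z in {z : ℂ | 1 < ‖z‖}, M z ∂volume) ≤ ∫ z : ℂ, M z :=
    setIntegral_le_integral hMint (Filter.Eventually.of_forall hMnonneg)
  have step3 : (∫ z : ℂ, M z) =
      4 * (2 * π * R) + 2 * nw * (2 * π * Real.log T) + 2 * nw ^ 2 * (2 * π * T⁻¹) := by
    have iA : Integrable (fun z : ℂ => 4 * fA R ‖z - w‖) := pA.const_mul 4
    have iB : Integrable (fun z : ℂ => 2 * nw * fB T ‖z‖) := (planeB hT1).1.const_mul (2 * nw)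
    have iC : Integrable (fun z : ℂ => 2 * nw ^ 2 * fC T ‖z‖) := (planeC hT0).1.const_mul (2 * nw ^ 2)
    have iAB : Integrable (fun z : ℂ => 4 * fA R ‖z - w‖ + 2 * nw * fB T ‖z‖) := iA.add iB
    simp only [hMdef]
    rw [integral_add iAB iC, integral_add iA iB,
      integral_const_mul, integral_const_mul, integral_const_mul,
      integral_sub_right_eq_self (fun z : ℂ => fA R ‖z‖) w,
      (planeA hR0).2, (planeB hT1).2, (planeC hT0).2]
  rw [step3] at step2
  have hlogT : Real.log T ≤ Real.log 2 + max 0 (Real.log nw) := by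
    rcases le_or_gt (2 * nw) 1 with h | h
    · rw [hTdef, max_eq_left h, Real.log_one]
      have := Real.log_pos (by norm_num : (1:ℝ) < 2)
      have := le_max_left 0 (Real.log nw)
      linarith
    · rw [hTdef, max_eq_right h.le, Real.log_mul (by norm_num) hnw.ne']
      have := le_max_right 0 (Real.log nw)
      linarith
  have hTinv : nw ^ 2 * T⁻¹ ≤ nw / 2 := by
    have h1 : T⁻¹ ≤ (2 * nw)⁻¹ := inv_anti₀ (by positivity) hT2
    calc nw ^ 2 * T⁻¹ ≤ nw ^ 2 * (2 * nw)⁻¹ :=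
          mul_le_mul_of_nonneg_left h1 (by positivity)
    _ = nw / 2 := by field_simp
  have hlogT0 : 0 ≤ Real.log T := Real.log_nonneg hT1
  have hL0 : 0 ≤ max 0 (Real.log nw) := le_max_left _ _
  have hpi : π ≤ 4 := pi_le_four
  have hpi0 : 0 < π := pi_pos
  have hlog2 : Real.log 2 ≤ 1 := by
    have := Real.log_le_sub_one_of_pos (by norm_num : (0:ℝ) < 2)
    linarith
  have key : 4 * (2 * π * R) + 2 * nw * (2 * π * Real.log T) + 2 * nw ^ 2 * (2 * π * T⁻¹)
      ≤ 50 * nw * (1 + max 0 (Real.log nw)) := by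
    set L : ℝ := max 0 (Real.log nw) with hLdef
    have hlog20 : 0 < Real.log 2 := Real.log_pos (by norm_num)
    have hpin : π * nw ≤ 4 * nw := mul_le_mul_of_nonneg_right hpi hnw.le
    have c1 : 4 * (2 * π * R) ≤ 16 * nw := by
      rw [hRdef]
      linarith [hpin]
    have hnwL : 0 ≤ nw * L := mul_nonneg hnw.le hL0
    have c2 : 2 * nw * (2 * π * Real.log T) ≤ 16 * nw + 16 * (nw * L) := by
      have hLT : Real.log T ≤ 1 + L := by linarith
      have h1a : π * Real.log T ≤ π * (1 + L) := mul_le_mul_of_nonneg_left hLT hpi0.le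
      have h1b : π * (1 + L) ≤ 4 * (1 + L) := mul_le_mul_of_nonneg_right hpi (by linarith)
      have h1 : 2 * π * Real.log T ≤ 8 * (1 + L) := by linarith
      calc 2 * nw * (2 * π * Real.log T) ≤ 2 * nw * (8 * (1 + L)) :=
            mul_le_mul_of_nonneg_left h1 (by positivity)
      _ = 16 * nw + 16 * (nw * L) := by ring
    have c3 : 2 * nw ^ 2 * (2 * π * T⁻¹) ≤ 8 * nw := by
      have h1 : 2 * nw ^ 2 * (2 * π * T⁻¹) = 4 * π * (nw ^ 2 * T⁻¹) := by ring
      have h2 : 4 * π * (nw ^ 2 * T⁻¹) ≤ 4 * π * (nw / 2) :=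
        mul_le_mul_of_nonneg_left hTinv (by positivity)
      have h3 : 4 * π * (nw / 2) ≤ 8 * nw := by linarith [hpin]
      linarith
    have hfin : 50 * nw * (1 + L) = 50 * nw + 50 * (nw * L) := by ring
    rw [hfin]
    linarith [c1, c2, c3]
  calc (∫ z in {z : ℂ | 1 < ‖z‖}, ‖w ^ 2 / (z ^ 2 * (w - z))‖ ∂volume)
      ≤ 4 * (2 * π * R) + 2 * nw * (2 * π * Real.log T) + 2 * nw ^ 2 * (2 * π * T⁻¹) :=
        le_trans step1 step2
  _ ≤ 50 * nw * (1 + max 0 (Real.log nw)) := key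
end

section
/- Let $\mu$ be a finite complex Borel measure on $\mathbb{C}$ satisfying $\int_{|z|>10} |z|\log|z| \, d|\mu|(z) < \infty$. Then the function $\tilde H(z) = \int \frac{w^2}{z^2(w-z)} d\mu(w)$ is absolutely integrable with respect to planar Lebesgue measure on $\{|z|>1\}$. -/
open MeasureTheory Real

section Aux

open Set Metric


lemma lintegral_radial (f : ℝ → ENNReal) (hf : Measurable f) :
    ∫⁻ z : ℂ, f ‖z‖ = (2 * ENNReal.ofReal π) * ∫⁻ r in Set.Ioi (0:ℝ), ENNReal.ofReal r * f r := by
  have h0 : ∫⁻ z : ℂ, f ‖z‖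
      = ∫⁻ x : ({0}ᶜ : Set ℂ), f ‖(x : ℂ)‖ ∂((volume : Measure ℂ).comap Subtype.val) := by
    rw [lintegral_subtype_comap (measurableSet_singleton (0:ℂ)).compl (fun z : ℂ => f ‖z‖),
      MeasureTheory.restrict_compl_singleton]
  rw [h0]
  have hmp := (volume : Measure ℂ).measurePreserving_homeomorphUnitSphereProd
  have h1 : ∫⁻ x : ({0}ᶜ : Set ℂ), f ‖(x : ℂ)‖ ∂((volume : Measure ℂ).comap Subtype.val)
      = ∫⁻ p : (sphere (0:ℂ) 1 × Ioi (0:ℝ)), f p.2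
        ∂((volume : Measure ℂ).toSphere.prod (Measure.volumeIoiPow (Module.finrank ℝ ℂ - 1))) := by
    rw [← hmp.lintegral_comp_emb (Homeomorph.measurableEmbedding _)
      (f := fun p : (sphere (0:ℂ) 1 × Ioi (0:ℝ)) => f p.2)]
    exact lintegral_congr fun x => by simp
  rw [h1]
  have h2 : ∫⁻ p : (sphere (0:ℂ) 1 × Ioi (0:ℝ)), f p.2
        ∂((volume : Measure ℂ).toSphere.prod (Measure.volumeIoiPow (Module.finrank ℝ ℂ - 1)))
      = (volume : Measure ℂ).toSphere Set.univ
        * ∫⁻ y : Ioi (0:ℝ), f y ∂(Measure.volumeIoiPow (Module.finrank ℝ ℂ - 1)) := by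
    rw [lintegral_prod _ (by fun_prop)]
    simp [lintegral_const, mul_comm]
  rw [h2]
  have h3 : (volume : Measure ℂ).toSphere Set.univ = 2 * ENNReal.ofReal π := by
    rw [Measure.toSphere_apply_univ, Complex.volume_ball, Complex.finrank_real_complex]
    rw [← NNReal.coe_real_pi, ENNReal.ofReal_coe_nnreal]
    simp
  have h4 : ∫⁻ y : Ioi (0:ℝ), f y ∂(Measure.volumeIoiPow (Module.finrank ℝ ℂ - 1))
      = ∫⁻ r in Set.Ioi (0:ℝ), ENNReal.ofReal r * f r := by
    rw [Measure.volumeIoiPow, lintegral_withDensity_eq_lintegral_mul _ (by fun_prop) (by fun_prop)]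
    rw [Complex.finrank_real_complex]
    have := lintegral_subtype_comap (μ := (volume : Measure ℝ)) (measurableSet_Ioi (a := (0:ℝ)))
      (fun r : ℝ => ENNReal.ofReal (r ^ 1) * f r)
    simp only [pow_one] at this ⊢
    rw [← this]
    exact lintegral_congr fun x => by simp [Pi.mul_apply]
  rw [h3, h4]

open ENNReal in
lemma modelA (c : ℂ) (R : ℝ) (hR : 0 ≤ R) :
    ∫⁻ z : ℂ in {z : ℂ | ‖z - c‖ < R}, ENNReal.ofReal (1 / ‖z - c‖)
      ≤ ENNReal.ofReal (2 * π * R) := by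
  have hmp : MeasurePreserving (fun z : ℂ => z + c) volume volume :=
    measurePreserving_add_right volume c
  have hset : {z : ℂ | ‖z - c‖ < R} = (fun z : ℂ => z + c) '' {z : ℂ | ‖z‖ < R} := by
    ext z
    simp only [Set.mem_setOf_eq, Set.mem_image]
    constructor
    · intro h; exact ⟨z - c, h, by ring⟩
    · rintro ⟨y, hy, rfl⟩; simpa using hy
  rw [hset, ← hmp.setLIntegral_comp_emb (MeasurableEquiv.addRight c).measurableEmbedding _ _]
  simp only [add_sub_cancel_right]
  have key : ∫⁻ z : ℂ in {z : ℂ | ‖z‖ < R}, ENNReal.ofReal (1 / ‖z‖)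
      = ∫⁻ z : ℂ, (fun r : ℝ => Set.indicator (Set.Iio R) (fun r => ENNReal.ofReal (1/r)) r) ‖z‖ := by
    rw [← lintegral_indicator]
    · exact lintegral_congr fun z => by
        by_cases h : ‖z‖ < R <;> simp [Set.indicator, h, Set.mem_setOf_eq]
    · exact measurableSet_lt (by fun_prop) measurable_const
  rw [key, lintegral_radial _ (Measurable.indicator (by fun_prop) measurableSet_Iio)]
  have : ∫⁻ r in Set.Ioi (0:ℝ), ENNReal.ofReal r
        * Set.indicator (Set.Iio R) (fun r => ENNReal.ofReal (1/r)) r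
      = ∫⁻ r in Set.Ioo (0:ℝ) R, (1 : ENNReal) := by
    rw [← lintegral_indicator measurableSet_Ioo]
    rw [← lintegral_indicator measurableSet_Ioi]
    refine lintegral_congr fun r => ?_
    by_cases h1 : 0 < r <;> by_cases h2 : r < R <;>
      simp [Set.indicator, h1, h2, Set.mem_Ioo, Set.mem_Ioi, Set.mem_Iio] <;>
      exact ENNReal.mul_inv_cancel (ENNReal.ofReal_pos.mpr h1).ne' ENNReal.ofReal_ne_top
  rw [this]
  simp only [lintegral_one, Measure.restrict_apply MeasurableSet.univ, Set.univ_inter,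
    Real.volume_Ioo, sub_zero]
  rw [show (2:ENNReal) = ENNReal.ofReal 2 by simp, ← ENNReal.ofReal_mul (by positivity),
    ← ENNReal.ofReal_mul (by positivity)]

lemma lintegral_radial_set (s : Set ℝ) (hs : MeasurableSet s) (g : ℝ → ENNReal)
    (hg : Measurable g) :
    ∫⁻ z : ℂ in {z : ℂ | ‖z‖ ∈ s}, g ‖z‖
      = (2 * ENNReal.ofReal π) * ∫⁻ r in Set.Ioi (0:ℝ) ∩ s, ENNReal.ofReal r * g r := by
  have e1 := lintegral_indicator (μ := (volume : Measure ℂ)) (measurable_norm hs)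
    (fun z : ℂ => g ‖z‖)
  have e2 : ∫⁻ z : ℂ in {z : ℂ | ‖z‖ ∈ s}, g ‖z‖
      = ∫⁻ z : ℂ, (fun r => s.indicator g r) ‖z‖ := by
    rw [show {z : ℂ | ‖z‖ ∈ s} = Norm.norm ⁻¹' s from rfl, ← e1]
    refine lintegral_congr fun z => ?_
    show _ = s.indicator g ‖z‖
    by_cases h : ‖z‖ ∈ s
    · rw [Set.indicator_of_mem h, Set.indicator_of_mem (show z ∈ Norm.norm ⁻¹' s from h)]
    · rw [Set.indicator_of_notMem h, Set.indicator_of_notMem (show z ∉ Norm.norm ⁻¹' s from h)]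
  rw [e2, lintegral_radial _ (hg.indicator hs)]
  congr 1
  have e3 := lintegral_indicator (μ := (volume : Measure ℝ).restrict (Set.Ioi 0)) hs
    (fun r : ℝ => ENNReal.ofReal r * g r)
  rw [Measure.restrict_restrict hs, Set.inter_comm s (Set.Ioi 0)] at e3
  rw [← e3]
  refine lintegral_congr fun r => ?_
  by_cases h2 : r ∈ s <;> simp [Set.indicator, h2]

open intervalIntegral in
lemma modelC (b : ℝ) (hb : 1 ≤ b) :
    ∫⁻ z : ℂ in {z : ℂ | ‖z‖ ∈ Set.Ioo 1 b}, ENNReal.ofReal (1 / ‖z‖^2)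
      ≤ ENNReal.ofReal (2 * π * Real.log b) := by
  have h := lintegral_radial_set (Set.Ioo 1 b) measurableSet_Ioo
    (fun r => ENNReal.ofReal (1 / r^2)) (by fun_prop)
  rw [h]
  have hinter : Set.Ioi (0:ℝ) ∩ Set.Ioo 1 b = Set.Ioo 1 b := by
    ext r; simp only [Set.mem_inter_iff, Set.mem_Ioi, Set.mem_Ioo]
    exact ⟨fun h => h.2, fun h => ⟨lt_trans one_pos h.1, h⟩⟩
  rw [hinter]
  have hcong : ∫⁻ r in Set.Ioo (1:ℝ) b, ENNReal.ofReal r * ENNReal.ofReal (1 / r^2)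
      = ∫⁻ r in Set.Ioo (1:ℝ) b, ENNReal.ofReal (1 / r) := by
    refine setLIntegral_congr_fun measurableSet_Ioo (fun r hr => ?_)
    have h0 : (0:ℝ) < r := lt_trans one_pos hr.1
    rw [← ENNReal.ofReal_mul h0.le]
    congr 1
    field_simp
  rw [hcong]
  have hint : IntegrableOn (fun r : ℝ => 1 / r) (Set.Ioo 1 b) := by
    have := (intervalIntegrable_one_div (a := 1) (b := b) (μ := volume)
      (fun x hx => by
        rw [Set.uIcc_of_le hb] at hx
        exact ne_of_gt (lt_of_lt_of_le one_pos hx.1)) (by fun_prop)).1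
    exact this.mono_set Set.Ioo_subset_Ioc_self
  rw [← ofReal_integral_eq_lintegral_ofReal hint (by
    filter_upwards [ae_restrict_mem measurableSet_Ioo] with r hr
    have : (0:ℝ) < r := lt_trans one_pos hr.1
    positivity)]
  have hval : ∫ r in Set.Ioo (1:ℝ) b, 1 / r = Real.log b := by
    rw [Measure.restrict_congr_set Ioo_ae_eq_Ioc, ← integral_of_le hb,
      integral_one_div (by
        intro hx
        rw [Set.uIcc_of_le hb] at hx
        exact absurd hx.1 (by norm_num))]
    simp
  rw [hval, show (2:ENNReal) = ENNReal.ofReal 2 by simp,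
    ← ENNReal.ofReal_mul (by positivity), ← ENNReal.ofReal_mul (by positivity)]

lemma modelD (a : ℝ) (ha : 1 ≤ a) :
    ∫⁻ z : ℂ in {z : ℂ | ‖z‖ ∈ Set.Ici a}, ENNReal.ofReal (1 / ‖z‖^3)
      ≤ ENNReal.ofReal (2 * π / a) := by
  have h := lintegral_radial_set (Set.Ici a) measurableSet_Ici
    (fun r => ENNReal.ofReal (1 / r^3)) (by fun_prop)
  rw [h]
  have h0a : (0:ℝ) < a := lt_of_lt_of_le one_pos ha
  have hinter : Set.Ioi (0:ℝ) ∩ Set.Ici a = Set.Ici a := by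
    ext r; simp only [Set.mem_inter_iff, Set.mem_Ioi, Set.mem_Ici]
    exact ⟨fun h => h.2, fun h => ⟨lt_of_lt_of_le h0a h, h⟩⟩
  rw [hinter]
  have hcong : ∫⁻ r in Set.Ici a, ENNReal.ofReal r * ENNReal.ofReal (1 / r^3)
      = ∫⁻ r in Set.Ioi a, ENNReal.ofReal (r ^ (-2 : ℝ)) := by
    rw [Measure.restrict_congr_set Ioi_ae_eq_Ici.symm]
    refine setLIntegral_congr_fun measurableSet_Ioi (fun r hr => ?_)
    have h0 : (0:ℝ) < r := lt_trans h0a hr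
    rw [← ENNReal.ofReal_mul h0.le]
    congr 1
    rw [Real.rpow_neg h0.le, show (2:ℝ) = ((2:ℕ):ℝ) by norm_num, Real.rpow_natCast]
    field_simp
  rw [hcong]
  have hint : IntegrableOn (fun r : ℝ => r ^ (-2:ℝ)) (Set.Ioi a) :=
    integrableOn_Ioi_rpow_of_lt (by norm_num) h0a
  rw [← ofReal_integral_eq_lintegral_ofReal hint (by
    filter_upwards [ae_restrict_mem measurableSet_Ioi] with r hr
    have : (0:ℝ) < r := lt_trans h0a hr
    positivity)]
  have hval : ∫ r in Set.Ioi a, r ^ (-2:ℝ) = a ^ (-1:ℝ) := by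
    rw [integral_Ioi_rpow_of_lt (by norm_num) h0a]
    norm_num
  rw [hval, show (2:ENNReal) = ENNReal.ofReal 2 by simp,
    ← ENNReal.ofReal_mul (by positivity), ← ENNReal.ofReal_mul (by positivity)]
  rw [Real.rpow_neg_one]
  rw [div_eq_mul_inv]

lemma rlog_ineq {r : ℝ} (hr0 : 0 ≤ r) : r ≤ 2 + r * Real.log (1 + r) := by
  rcases le_total r 2 with h | h
  · have : 0 ≤ r * Real.log (1 + r) :=
      mul_nonneg hr0 (Real.log_nonneg (by linarith))
    linarith
  · have h1 : (1:ℝ) ≤ Real.log (1 + r) := by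
      have he : Real.exp 1 ≤ 1 + r := by
        have := Real.exp_one_lt_d9
        linarith
      calc (1:ℝ) = Real.log (Real.exp 1) := (Real.log_exp 1).symm
        _ ≤ Real.log (1 + r) := Real.log_le_log (Real.exp_pos 1) he
    nlinarith

lemma keyBound (w : ℂ) :
    ∫⁻ z : ℂ in {z : ℂ | 1 < ‖z‖}, ENNReal.ofReal (‖w‖^2 / (‖z‖^2 * ‖w - z‖))
      ≤ ENNReal.ofReal (300 * (1 + ‖w‖ * Real.log (1 + ‖w‖))) := by
  set r := ‖w‖ with hrdef
  have hr0 : 0 ≤ r := norm_nonneg w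
  have hlog0 : 0 ≤ Real.log (1 + r) := Real.log_nonneg (by linarith)
  set f : ℂ → ENNReal := fun z => ENNReal.ofReal (r^2 / (‖z‖^2 * ‖w - z‖)) with hf
  set S : Set ℂ := {z | 1 < ‖z‖} with hS
  set R1 : Set ℂ := S ∩ {z | ‖z - w‖ < 1} with hR1
  set R2 : Set ℂ := S ∩ {z | max 1 (2*r) ≤ ‖z‖} with hR2
  set R3 : Set ℂ := S ∩ {z | ‖z‖ ≤ r/2} with hR3
  set R4 : Set ℂ := S ∩ {z | 1 ≤ ‖z - w‖ ∧ r/2 < ‖z‖ ∧ ‖z‖ < 2*r} with hR4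
  have hScov : S ⊆ R1 ∪ R2 ∪ R3 ∪ R4 := by
    intro z hz
    by_cases h1 : ‖z - w‖ < 1
    · exact Or.inl (Or.inl (Or.inl ⟨hz, h1⟩))
    by_cases h2 : max 1 (2*r) ≤ ‖z‖
    · exact Or.inl (Or.inl (Or.inr ⟨hz, h2⟩))
    by_cases h3 : ‖z‖ ≤ r/2
    · exact Or.inl (Or.inr ⟨hz, h3⟩)
    · refine Or.inr ⟨hz, le_of_not_gt h1, lt_of_not_ge h3, ?_⟩
      rcases lt_max_iff.mp (lt_of_not_ge h2) with h | h
      · exact absurd hz (by simpa [hS] using not_lt.mpr h.le)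
      · exact h
  have hmeasS : MeasurableSet S := measurableSet_lt measurable_const measurable_norm
  have hmR1 : MeasurableSet R1 :=
    hmeasS.inter (measurableSet_lt (by fun_prop) measurable_const)
  have hmR2 : MeasurableSet R2 :=
    hmeasS.inter (measurableSet_le measurable_const measurable_norm)
  have hmR3 : MeasurableSet R3 :=
    hmeasS.inter (measurableSet_le measurable_norm measurable_const)
  have hmR4 : MeasurableSet R4 := by
    refine hmeasS.inter ?_
    have hseteq : {z : ℂ | 1 ≤ ‖z - w‖ ∧ r/2 < ‖z‖ ∧ ‖z‖ < 2*r}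
        = {z : ℂ | 1 ≤ ‖z - w‖} ∩ ({z : ℂ | r/2 < ‖z‖} ∩ {z : ℂ | ‖z‖ < 2*r}) := rfl
    rw [hseteq]
    refine MeasurableSet.inter (measurableSet_le measurable_const
      ((measurable_id.sub_const w).norm)) ?_
    exact (measurableSet_lt measurable_const measurable_norm).inter
      (measurableSet_lt measurable_norm measurable_const)
  -- Region 1 estimate
  have est1 : ∫⁻ z in R1, f z ≤ ENNReal.ofReal (8 * π) := by
    have hpt : ∀ z ∈ R1, f z ≤ ENNReal.ofReal 4 * ENNReal.ofReal (1 / ‖z - w‖) := by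
      rintro z ⟨hzS, hz1⟩
      have hz : (1:ℝ) < ‖z‖ := hzS
      have hwz : ‖w - z‖ = ‖z - w‖ := norm_sub_rev w z
      have hr4 : r^2 ≤ 4 * ‖z‖^2 := by
        have : r ≤ ‖w - z‖ + ‖z‖ := by
          calc r = ‖(w - z) + z‖ := by rw [hrdef]; ring_nf
          _ ≤ ‖w - z‖ + ‖z‖ := norm_add_le _ _
        rw [hwz] at this
        nlinarith [Set.mem_setOf_eq ▸ hz1]
      simp only [hf]
      rw [← ENNReal.ofReal_mul (by norm_num), hwz]
      apply ENNReal.ofReal_le_ofReal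
      rcases eq_or_lt_of_le (norm_nonneg (z - w)) with hc0 | hc0
      · rw [← hc0]
        simp
      · rw [mul_one_div, div_le_div_iff₀ (by positivity) hc0]
        nlinarith [hc0, norm_nonneg (z-w)]
    calc ∫⁻ z in R1, f z
        ≤ ∫⁻ z in R1, ENNReal.ofReal 4 * ENNReal.ofReal (1 / ‖z - w‖) :=
          setLIntegral_mono' hmR1 hpt
      _ = ENNReal.ofReal 4 * ∫⁻ z in R1, ENNReal.ofReal (1 / ‖z - w‖) :=
          lintegral_const_mul _ (by fun_prop)
      _ ≤ ENNReal.ofReal 4 * ∫⁻ z in {z : ℂ | ‖z - w‖ < 1}, ENNReal.ofReal (1 / ‖z - w‖) := by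
          gcongr
          exact Set.inter_subset_right
      _ ≤ ENNReal.ofReal 4 * ENNReal.ofReal (2 * π * 1) := by
          gcongr
          exact modelA w 1 (by norm_num)
      _ = ENNReal.ofReal (8 * π) := by
          rw [← ENNReal.ofReal_mul (by norm_num)]
          ring_nf
  -- Region 2 estimate
  have est2 : ∫⁻ z in R2, f z ≤ ENNReal.ofReal (π + 2 * π * r) := by
    have hpt : ∀ z ∈ R2, f z ≤ ENNReal.ofReal (2*r^2) * ENNReal.ofReal (1 / ‖z‖^3) := by
      rintro z ⟨hzS, hz2⟩
      have hz : (1:ℝ) < ‖z‖ := hzS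
      have hz2' : max 1 (2*r) ≤ ‖z‖ := hz2
      have hrz : 2*r ≤ ‖z‖ := le_trans (le_max_right _ _) hz2'
      have hc : ‖z‖ - r ≤ ‖w - z‖ := by
        calc ‖z‖ - r = ‖z‖ - ‖w‖ := rfl
        _ ≤ ‖z - w‖ := norm_sub_norm_le z w
        _ = ‖w - z‖ := (norm_sub_rev w z).symm
      have hcpos : ‖z‖/2 ≤ ‖w - z‖ := by linarith
      simp only [hf]
      rw [← ENNReal.ofReal_mul (by positivity)]
      apply ENNReal.ofReal_le_ofReal
      rw [mul_one_div, div_le_div_iff₀ (by nlinarith) (by positivity)]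
      nlinarith [sq_nonneg r, sq_nonneg ‖z‖, mul_le_mul_of_nonneg_left hcpos
        (mul_nonneg (sq_nonneg r) (sq_nonneg ‖z‖))]
    calc ∫⁻ z in R2, f z
        ≤ ∫⁻ z in R2, ENNReal.ofReal (2*r^2) * ENNReal.ofReal (1 / ‖z‖^3) :=
          setLIntegral_mono' hmR2 hpt
      _ = ENNReal.ofReal (2*r^2) * ∫⁻ z in R2, ENNReal.ofReal (1 / ‖z‖^3) :=
          lintegral_const_mul _ (by fun_prop)
      _ ≤ ENNReal.ofReal (2*r^2)
          * ∫⁻ z in {z : ℂ | ‖z‖ ∈ Set.Ici (max 1 (2*r))}, ENNReal.ofReal (1 / ‖z‖^3) := by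
          gcongr
          exact fun z hz => hz.2
      _ ≤ ENNReal.ofReal (2*r^2) * ENNReal.ofReal (2 * π / max 1 (2*r)) := by
          gcongr
          exact modelD _ (le_max_left _ _)
      _ ≤ ENNReal.ofReal (π + 2 * π * r) := by
          rw [← ENNReal.ofReal_mul (by positivity)]
          apply ENNReal.ofReal_le_ofReal
          rcases le_total 1 (2*r) with h | h
          · rw [max_eq_right h]
            have hrpos : 0 < r := by linarith
            rw [div_eq_mul_inv, ← mul_assoc]
            have : 2*r^2*(2*π) * (2*r)⁻¹ = 2*π*r := by
              field_simp
            rw [this]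
            have := Real.pi_pos
            linarith
          · rw [max_eq_left h, div_one]
            have hπ := Real.pi_pos
            have key : (2*r) * (r * (2*π)) ≤ 1 * (r * (2*π)) :=
              mul_le_mul_of_nonneg_right h (by positivity)
            nlinarith
  -- Region 3 estimate
  have est3 : ∫⁻ z in R3, f z ≤ ENNReal.ofReal (4 * π * (r * Real.log (1+r))) := by
    have hpt : ∀ z ∈ R3, f z ≤ ENNReal.ofReal (2*r) * ENNReal.ofReal (1 / ‖z‖^2) := by
      rintro z ⟨hzS, hz3⟩
      have hz : (1:ℝ) < ‖z‖ := hzS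
      have hz3' : ‖z‖ ≤ r/2 := hz3
      have hc : r - ‖z‖ ≤ ‖w - z‖ := by
        calc r - ‖z‖ = ‖w‖ - ‖z‖ := rfl
        _ ≤ ‖w - z‖ := norm_sub_norm_le w z
      have hcpos : r/2 ≤ ‖w - z‖ := by linarith
      simp only [hf]
      rw [← ENNReal.ofReal_mul (by positivity)]
      apply ENNReal.ofReal_le_ofReal
      rw [mul_one_div, div_le_div_iff₀ (by nlinarith) (by positivity)]
      nlinarith [mul_le_mul_of_nonneg_left hcpos
        (mul_nonneg hr0 (sq_nonneg ‖z‖)), sq_nonneg ‖z‖]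
    calc ∫⁻ z in R3, f z
        ≤ ∫⁻ z in R3, ENNReal.ofReal (2*r) * ENNReal.ofReal (1 / ‖z‖^2) :=
          setLIntegral_mono' hmR3 hpt
      _ = ENNReal.ofReal (2*r) * ∫⁻ z in R3, ENNReal.ofReal (1 / ‖z‖^2) :=
          lintegral_const_mul _ (by fun_prop)
      _ ≤ ENNReal.ofReal (2*r)
          * ∫⁻ z in {z : ℂ | ‖z‖ ∈ Set.Ioo 1 (1+r)}, ENNReal.ofReal (1 / ‖z‖^2) := by
          gcongr
          refine fun z hz => ?_
          have h1 : (1:ℝ) < ‖z‖ := hz.1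
          have h2 : ‖z‖ ≤ r/2 := hz.2
          exact ⟨h1, by linarith⟩
      _ ≤ ENNReal.ofReal (2*r) * ENNReal.ofReal (2 * π * Real.log (1+r)) := by
          gcongr
          exact modelC _ (by linarith)
      _ = ENNReal.ofReal (4 * π * (r * Real.log (1+r))) := by
          rw [← ENNReal.ofReal_mul (by positivity)]
          ring_nf
  -- Region 4 estimate
  have est4 : ∫⁻ z in R4, f z ≤ ENNReal.ofReal (24 * π * r) := by
    have hpt : ∀ z ∈ R4, f z ≤ ENNReal.ofReal 4 * ENNReal.ofReal (1 / ‖z - w‖) := by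
      rintro z ⟨hzS, hz4⟩
      have hz : (1:ℝ) < ‖z‖ := hzS
      obtain ⟨h41, h42, h43⟩ := hz4
      have hwz : ‖w - z‖ = ‖z - w‖ := norm_sub_rev w z
      simp only [hf]
      rw [← ENNReal.ofReal_mul (by norm_num), hwz]
      apply ENNReal.ofReal_le_ofReal
      rw [mul_one_div, div_le_div_iff₀ (by nlinarith) (by linarith)]
      have hsq : r^2 ≤ 4*‖z‖^2 := by nlinarith
      calc r^2 * ‖z - w‖ ≤ (4*‖z‖^2) * ‖z - w‖ :=
            mul_le_mul_of_nonneg_right hsq (norm_nonneg _)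
        _ = 4 * (‖z‖^2 * ‖z - w‖) := by ring
    calc ∫⁻ z in R4, f z
        ≤ ∫⁻ z in R4, ENNReal.ofReal 4 * ENNReal.ofReal (1 / ‖z - w‖) :=
          setLIntegral_mono' hmR4 hpt
      _ = ENNReal.ofReal 4 * ∫⁻ z in R4, ENNReal.ofReal (1 / ‖z - w‖) :=
          lintegral_const_mul _ (by fun_prop)
      _ ≤ ENNReal.ofReal 4 * ∫⁻ z in {z : ℂ | ‖z - w‖ < 3*r}, ENNReal.ofReal (1 / ‖z - w‖) := by
          gcongr
          refine fun z hz => ?_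
          obtain ⟨hzS, h41, h42, h43⟩ := hz
          have : ‖z - w‖ ≤ ‖z‖ + ‖w‖ := norm_sub_le z w
          simp only [Set.mem_setOf_eq]
          have hzS' : (1:ℝ) < ‖z‖ := hzS
          linarith
      _ ≤ ENNReal.ofReal 4 * ENNReal.ofReal (2 * π * (3*r)) := by
          gcongr
          exact modelA w (3*r) (by positivity)
      _ = ENNReal.ofReal (24 * π * r) := by
          rw [← ENNReal.ofReal_mul (by norm_num)]
          ring_nf
  -- combine
  calc ∫⁻ z in S, f z ≤ ∫⁻ z in R1 ∪ R2 ∪ R3 ∪ R4, f z := lintegral_mono_set hScov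
    _ ≤ (∫⁻ z in R1 ∪ R2 ∪ R3, f z) + ∫⁻ z in R4, f z := lintegral_union_le _ _ _
    _ ≤ ((∫⁻ z in R1 ∪ R2, f z) + ∫⁻ z in R3, f z) + ∫⁻ z in R4, f z := by
        gcongr
        exact lintegral_union_le _ _ _
    _ ≤ (((∫⁻ z in R1, f z) + ∫⁻ z in R2, f z) + ∫⁻ z in R3, f z) + ∫⁻ z in R4, f z := by
        gcongr
        exact lintegral_union_le _ _ _
    _ ≤ ((ENNReal.ofReal (8*π) + ENNReal.ofReal (π + 2*π*r))
          + ENNReal.ofReal (4 * π * (r * Real.log (1+r)))) + ENNReal.ofReal (24*π*r) := by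
        gcongr
    _ ≤ ENNReal.ofReal (300 * (1 + r * Real.log (1 + r))) := by
        rw [← ENNReal.ofReal_add (by positivity) (by positivity),
          ← ENNReal.ofReal_add (by positivity) (by positivity),
          ← ENNReal.ofReal_add (by positivity) (by positivity)]
        apply ENNReal.ofReal_le_ofReal
        have hpi : π ≤ 4 := by linarith [Real.pi_le_four]
        have hpi0 : 0 < π := Real.pi_pos
        have h2 : r ≤ 2 + r * Real.log (1 + r) := rlog_ineq hr0
        have h3 : 0 ≤ r * Real.log (1+r) := mul_nonneg hr0 hlog0
        nlinarith

lemma boundIntegrable (ρ : Measure ℂ) [IsFiniteMeasure ρ]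
    (hmu : IntegrableOn (fun w : ℂ => ‖w‖ * Real.log ‖w‖) {w : ℂ | 10 < ‖w‖} ρ) :
    ∫⁻ w, ENNReal.ofReal (300 * (1 + ‖w‖ * Real.log (1 + ‖w‖))) ∂ρ < ⊤ := by
  have hx : ∀ w : ℂ, 0 ≤ ‖w‖ * Real.log (1 + ‖w‖) :=
    fun w => mul_nonneg (norm_nonneg w) (Real.log_nonneg (by linarith [norm_nonneg w]))
  have heq : ∀ w : ℂ, ENNReal.ofReal (300 * (1 + ‖w‖ * Real.log (1 + ‖w‖)))
      = ENNReal.ofReal 300 * (1 + ENNReal.ofReal (‖w‖ * Real.log (1 + ‖w‖))) := by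
    intro w
    rw [ENNReal.ofReal_mul (by norm_num), ENNReal.ofReal_add (by norm_num) (hx w),
      ENNReal.ofReal_one]
  simp_rw [heq]
  rw [lintegral_const_mul (f := fun w : ℂ => 1 + ENNReal.ofReal (‖w‖ * Real.log (1 + ‖w‖))) _ (measurable_const.add
    ((measurable_norm.mul ((measurable_const.add measurable_norm).log)).ennreal_ofReal))]
  refine ENNReal.mul_lt_top ENNReal.ofReal_lt_top ?_
  rw [lintegral_add_left measurable_const]
  refine ENNReal.add_lt_top.mpr ⟨?_, ?_⟩
  · simpa using measure_lt_top ρ _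
  set A : Set ℂ := {w : ℂ | 10 < ‖w‖} with hA
  have hmA : MeasurableSet A := measurableSet_lt measurable_const measurable_norm
  rw [← lintegral_add_compl _ hmA]
  refine ENNReal.add_lt_top.mpr ⟨?_, ?_⟩
  · -- on A, bounded by 2 ‖w‖ log ‖w‖
    have hb : ∀ w ∈ A, ENNReal.ofReal (‖w‖ * Real.log (1 + ‖w‖))
        ≤ 2 * (‖(‖w‖ * Real.log ‖w‖)‖₊ : ENNReal) := by
      intro w hw
      have hw10 : (10:ℝ) < ‖w‖ := hw
      have hlog2 : Real.log (1 + ‖w‖) ≤ 2 * Real.log ‖w‖ := by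
        have h1 : (1:ℝ) + ‖w‖ ≤ ‖w‖^2 := by nlinarith
        calc Real.log (1 + ‖w‖) ≤ Real.log (‖w‖^2) :=
              Real.log_le_log (by linarith) h1
          _ = 2 * Real.log ‖w‖ := by
              rw [Real.log_pow]; norm_num
      calc ENNReal.ofReal (‖w‖ * Real.log (1 + ‖w‖))
          ≤ ENNReal.ofReal (2 * (‖w‖ * Real.log ‖w‖)) := by
            apply ENNReal.ofReal_le_ofReal
            nlinarith [norm_nonneg w]
        _ = ENNReal.ofReal 2 * ENNReal.ofReal (‖w‖ * Real.log ‖w‖) :=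
            ENNReal.ofReal_mul (by norm_num)
        _ ≤ 2 * (‖(‖w‖ * Real.log ‖w‖)‖₊ : ENNReal) := by
            gcongr
            · simp [ENNReal.ofReal_ofNat]
            · exact Real.ofReal_le_enorm _
    calc ∫⁻ w in A, ENNReal.ofReal (‖w‖ * Real.log (1 + ‖w‖)) ∂ρ
        ≤ ∫⁻ w in A, 2 * (‖(‖w‖ * Real.log ‖w‖)‖₊ : ENNReal) ∂ρ :=
          setLIntegral_mono' hmA hb
      _ = 2 * ∫⁻ w in A, (‖(‖w‖ * Real.log ‖w‖)‖₊ : ENNReal) ∂ρ :=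
          lintegral_const_mul _
            (measurable_norm.mul measurable_norm.log).nnnorm.coe_nnreal_ennreal
      _ < ⊤ := ENNReal.mul_lt_top (by norm_num) hmu.2
  · -- on Aᶜ, bounded
    have hb : ∀ w ∈ Aᶜ, ENNReal.ofReal (‖w‖ * Real.log (1 + ‖w‖))
        ≤ ENNReal.ofReal 110 := by
      intro w hw
      have hw10 : ‖w‖ ≤ 10 := le_of_not_gt hw
      apply ENNReal.ofReal_le_ofReal
      have hlog : Real.log (1 + ‖w‖) ≤ 11 := by
        calc Real.log (1 + ‖w‖) ≤ (1 + ‖w‖) - 1 :=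
              Real.log_le_sub_one_of_pos (by linarith [norm_nonneg w])
          _ ≤ 11 := by linarith
      nlinarith [norm_nonneg w, Real.log_nonneg (show (1:ℝ) ≤ 1 + ‖w‖ by linarith [norm_nonneg w])]
    calc ∫⁻ w in Aᶜ, ENNReal.ofReal (‖w‖ * Real.log (1 + ‖w‖)) ∂ρ
        ≤ ∫⁻ _ in Aᶜ, ENNReal.ofReal 110 ∂ρ := setLIntegral_mono' hmA.compl hb
      _ = ENNReal.ofReal 110 * ρ Aᶜ := by
          rw [setLIntegral_const]
      _ < ⊤ := ENNReal.mul_lt_top ENNReal.ofReal_lt_top (measure_lt_top ρ _)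


end Aux

/-- Let `μ` be a finite complex Borel measure on `ℂ`, represented by its polar decomposition
`dμ = g d ρ` where `ρ = |μ|` is a finite positive measure and `‖g‖ = 1`.  If
`∫_{|z|>10} |z| log|z| d|μ|(z) < ∞` then `H̃(z) = ∫ w²/(z²(w-z)) dμ(w)` is absolutely
integrable on `{|z|>1}` with respect to planar Lebesgue measure. -/
theorem stmt1 (ρ : Measure ℂ) [IsFiniteMeasure ρ] (g : ℂ → ℂ)
    (hg_meas : Measurable g) (hg_norm : ∀ w, ‖g w‖ = 1)
    (hmu : IntegrableOn (fun w : ℂ => ‖w‖ * Real.log ‖w‖) {w : ℂ | 10 < ‖w‖} ρ) :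
    IntegrableOn (fun z : ℂ => ∫ w, w ^ 2 / (z ^ 2 * (w - z)) * g w ∂ρ)
      {z : ℂ | 1 < ‖z‖} volume := by
  set S : Set ℂ := {z : ℂ | 1 < ‖z‖} with hS
  have hmeasS : MeasurableSet S := measurableSet_lt measurable_const measurable_norm
  have hFmeas : Measurable (fun p : ℂ × ℂ => p.2 ^ 2 / (p.1 ^ 2 * (p.2 - p.1)) * g p.2) := by
    fun_prop
  have hF : Integrable (fun p : ℂ × ℂ => p.2 ^ 2 / (p.1 ^ 2 * (p.2 - p.1)) * g p.2)
      ((volume.restrict S).prod ρ) := by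
    refine ⟨hFmeas.aestronglyMeasurable, ?_⟩
    show (∫⁻ p, (‖(fun p : ℂ × ℂ => p.2 ^ 2 / (p.1 ^ 2 * (p.2 - p.1)) * g p.2) p‖₊ : ENNReal)
      ∂((volume.restrict S).prod ρ)) < ⊤
    rw [lintegral_prod_symm _ (by fun_prop)]
    have hinner : ∀ w : ℂ, ∫⁻ z in S, (‖w ^ 2 / (z ^ 2 * (w - z)) * g w‖₊ : ENNReal) ∂volume
        ≤ ENNReal.ofReal (300 * (1 + ‖w‖ * Real.log (1 + ‖w‖))) := by
      intro w
      have heq : ∀ z : ℂ, (‖w ^ 2 / (z ^ 2 * (w - z)) * g w‖₊ : ENNReal)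
          = ENNReal.ofReal (‖w‖^2 / (‖z‖^2 * ‖w - z‖)) := by
        intro z
        rw [← enorm_eq_nnnorm, ← ofReal_norm]
        congr 1
        rw [norm_mul, hg_norm, mul_one, norm_div, norm_mul, norm_pow, norm_pow]
      calc ∫⁻ z in S, (‖w ^ 2 / (z ^ 2 * (w - z)) * g w‖₊ : ENNReal) ∂volume
          = ∫⁻ z in S, ENNReal.ofReal (‖w‖^2 / (‖z‖^2 * ‖w - z‖)) ∂volume :=
            lintegral_congr fun z => heq z
        _ ≤ ENNReal.ofReal (300 * (1 + ‖w‖ * Real.log (1 + ‖w‖))) := keyBound w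
    calc ∫⁻ w, ∫⁻ z in S, (‖w ^ 2 / (z ^ 2 * (w - z)) * g w‖₊ : ENNReal) ∂volume ∂ρ
        ≤ ∫⁻ w, ENNReal.ofReal (300 * (1 + ‖w‖ * Real.log (1 + ‖w‖))) ∂ρ :=
          lintegral_mono hinner
      _ < ⊤ := boundIntegrable ρ hmu
  exact hF.integral_prod_left
end

section
/- Let $\mu$ be a finite complex Borel measure on $\mathbb{C}$ satisfying $\int_{|z|>10}|z|\log|z|\,d|\mu|(z) < \infty$, and set $A = \int d\mu$ and $B = \int w\,d\mu(w)$. Then the Cauchy transform $\hat\mu$ is absolutely integrable on $\{|z| > 1\}$ with respect to planar Lebesgue measure if and only if $A = 0$ and $B = 0$. -/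
open MeasureTheory Real Set Metric
open scoped ENNReal NNReal

lemma lint_radial (f : ℝ → ℝ≥0∞) (hf : Measurable f) :
    ∫⁻ z : ℂ, f ‖z‖ = (2 * ENNReal.ofReal π) * ∫⁻ r in Ioi (0:ℝ), ENNReal.ofReal r * f r := by
  have h0 : ∫⁻ z : ℂ, f ‖z‖ = ∫⁻ z in ({0}ᶜ : Set ℂ), f ‖z‖ := by
    rw [← setLIntegral_univ]
    exact (setLIntegral_congr (ae_eq_univ.2 (by simp))).symm
  rw [h0, ← lintegral_subtype_comap (measurableSet_singleton (0:ℂ)).compl]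
  have hmp := (volume : Measure ℂ).measurePreserving_homeomorphUnitSphereProd
  have hcomp := hmp.lintegral_comp (f := fun p : sphere (0:ℂ) 1 × Ioi (0:ℝ) => f p.2)
    (by exact hf.comp (measurable_subtype_coe.comp measurable_snd))
  have h1 : ∫⁻ x : ({0}ᶜ : Set ℂ), f ‖(x:ℂ)‖ ∂((volume : Measure ℂ).comap (↑))
      = ∫⁻ p : sphere (0:ℂ) 1 × Ioi (0:ℝ), f p.2
          ∂((volume : Measure ℂ).toSphere.prod (.volumeIoiPow (Module.finrank ℝ ℂ - 1))) := by
    rw [← hcomp]; simp [homeomorphUnitSphereProd]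
  rw [h1, lintegral_prod _ (by
    exact (hf.comp (measurable_subtype_coe.comp measurable_snd)).aemeasurable)]
  simp only [lintegral_const]
  have h2 : ∫⁻ y : Ioi (0:ℝ), f y ∂(Measure.volumeIoiPow (Module.finrank ℝ ℂ - 1))
      = ∫⁻ r in Ioi (0:ℝ), ENNReal.ofReal r * f r := by
    rw [Measure.volumeIoiPow, lintegral_withDensity_eq_lintegral_mul _
      (f := fun r : Ioi (0:ℝ) => ENNReal.ofReal ((r:ℝ) ^ (Module.finrank ℝ ℂ - 1)))
      (by exact (measurable_subtype_coe.pow_const _).ennreal_ofReal)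
      (g := fun y : Ioi (0:ℝ) => f y) (hf.comp measurable_subtype_coe)]
    rw [← lintegral_subtype_comap measurableSet_Ioi
      (f := fun r : ℝ => ENNReal.ofReal r * f r)]
    congr 1
    ext y
    simp [Complex.finrank_real_complex]
  rw [h2, Measure.toSphere_apply_univ, Complex.volume_ball, Complex.finrank_real_complex]
  rw [mul_comm]
  congr 1
  simp [ENNReal.ofReal_one, ← NNReal.coe_real_pi, ENNReal.ofReal_coe_nnreal]


lemma lint_radial_set (s : Set ℝ) (hs : MeasurableSet s) (h : ℝ → ℝ≥0∞) (hh : Measurable h) :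
    ∫⁻ z : ℂ in {z | ‖z‖ ∈ s}, h ‖z‖
      = (2 * ENNReal.ofReal π) * ∫⁻ r in s ∩ Ioi (0:ℝ), ENNReal.ofReal r * h r := by
  have hsm : MeasurableSet {z : ℂ | ‖z‖ ∈ s} := measurable_norm hs
  have h1 : ∫⁻ z : ℂ in {z | ‖z‖ ∈ s}, h ‖z‖ = ∫⁻ z : ℂ, s.indicator h ‖z‖ := by
    rw [← lintegral_indicator hsm]
    exact lintegral_congr fun z => by by_cases hz : ‖z‖ ∈ s <;> simp [hz, Set.indicator]
  rw [h1, lint_radial _ (hh.indicator hs)]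
  congr 1
  have h2 : ∀ r : ℝ, ENNReal.ofReal r * s.indicator h r
      = s.indicator (fun r => ENNReal.ofReal r * h r) r := fun r => by
    by_cases hr : r ∈ s <;> simp [hr]
  rw [lintegral_congr h2, lintegral_indicator (μ := volume.restrict (Ioi 0)) hs,
    Measure.restrict_restrict hs]

lemma lint_C1 {m : ℝ} (hm : 0 < m) :
    ∫⁻ z : ℂ in {z | m < ‖z‖}, ENNReal.ofReal (1/‖z‖^3)
      = (2 * ENNReal.ofReal π) * ENNReal.ofReal (1/m) := by
  have h0 : {z : ℂ | m < ‖z‖} = {z : ℂ | ‖z‖ ∈ Ioi m} := rfl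
  have key := lint_radial_set (Ioi m) measurableSet_Ioi
    (fun r => ENNReal.ofReal (1/r^3)) (by fun_prop)
  rw [h0, key]
  congr 1
  have h1 : Ioi m ∩ Ioi (0:ℝ) = Ioi m := inter_eq_left.2 (Ioi_subset_Ioi hm.le)
  rw [h1]
  have h2 : ∀ r ∈ Ioi m, ENNReal.ofReal r * ENNReal.ofReal (1/r^3)
      = ENNReal.ofReal (r ^ (-2:ℝ)) := by
    intro r hr
    have hr0 : 0 < r := hm.trans hr
    rw [← ENNReal.ofReal_mul hr0.le]
    congr 1
    rw [rpow_neg hr0.le, ← rpow_natCast r 3] at *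
    rw [show ((3:ℕ):ℝ) = (3:ℝ) by norm_num]
    rw [show (2:ℝ) = (3:ℝ) - 1 by norm_num, rpow_sub hr0]
    field_simp
    simp
  rw [setLIntegral_congr_fun measurableSet_Ioi h2]
  rw [← ofReal_integral_eq_lintegral_ofReal (integrableOn_Ioi_rpow_of_lt (by norm_num) hm)
    ((ae_restrict_iff' measurableSet_Ioi).2
      (.of_forall fun r hr => rpow_nonneg (hm.trans hr).le _))]
  rw [integral_Ioi_rpow_of_lt (by norm_num) hm]
  norm_num
  rw [rpow_neg_one]

lemma lint_C2 (s : ℝ) :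
    ∫⁻ z : ℂ in {z | 1 < ‖z‖ ∧ ‖z‖ < s}, ENNReal.ofReal (1/‖z‖^2)
      ≤ (2 * ENNReal.ofReal π) * ENNReal.ofReal (Real.log (max s 1)) := by
  have h0 : {z : ℂ | 1 < ‖z‖ ∧ ‖z‖ < s} = {z : ℂ | ‖z‖ ∈ Ioo 1 s} := rfl
  have key := lint_radial_set (Ioo 1 s) measurableSet_Ioo
    (fun r => ENNReal.ofReal (1/r^2)) (by fun_prop)
  rw [h0, key]
  have h1 : Ioo (1:ℝ) s ∩ Ioi (0:ℝ) = Ioo 1 s :=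
    inter_eq_left.2 fun r hr => lt_trans one_pos hr.1
  rw [h1]
  refine mul_le_mul_right ?_ _
  have h2 : ∀ r ∈ Ioo (1:ℝ) s, ENNReal.ofReal r * ENNReal.ofReal (1/r^2)
      = ENNReal.ofReal r⁻¹ := by
    intro r hr
    have hr0 : 0 < r := lt_trans one_pos hr.1
    rw [← ENNReal.ofReal_mul hr0.le]
    congr 1
    field_simp
  rw [setLIntegral_congr_fun measurableSet_Ioo h2]
  rcases le_or_gt s 1 with hs | hs
  · rw [Ioo_eq_empty (by intro h; exact absurd (h.trans_le hs) (lt_irrefl 1))]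
    simp
  · have hInt : IntegrableOn (fun r : ℝ => r⁻¹) (Ioo 1 s) := by
      refine (ContinuousOn.integrableOn_Icc ?_).mono_set Ioo_subset_Icc_self
      exact continuousOn_inv₀.mono fun r hr => by
        intro h; rw [h] at hr; exact absurd hr.1 (by norm_num)
    rw [← ofReal_integral_eq_lintegral_ofReal hInt
      ((ae_restrict_iff' measurableSet_Ioo).2
        (.of_forall fun r hr => inv_nonneg.2 (lt_trans one_pos hr.1).le))]
    refine ENNReal.ofReal_le_ofReal ?_
    rw [← integral_Ioc_eq_integral_Ioo, ← intervalIntegral.integral_of_le hs.le]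
    rw [integral_inv (by
      rw [Set.uIcc_of_le hs.le]; intro h; exact absurd h.1 (by norm_num))]
    rw [max_eq_left hs.le, div_one]

lemma lint_C3 {t : ℝ} (ht : 0 ≤ t) :
    ∫⁻ z : ℂ in Metric.closedBall (0:ℂ) t, ENNReal.ofReal (1/‖z‖)
      ≤ (2 * ENNReal.ofReal π) * ENNReal.ofReal t := by
  have h0 : Metric.closedBall (0:ℂ) t = {z : ℂ | ‖z‖ ∈ Icc 0 t} := by
    ext z; simp [mem_closedBall_zero_iff, norm_nonneg]
  have key := lint_radial_set (Icc 0 t) measurableSet_Icc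
    (fun r => ENNReal.ofReal (1/r)) (by fun_prop)
  rw [h0, key]
  refine mul_le_mul_right ?_ _
  have h1 : Icc (0:ℝ) t ∩ Ioi (0:ℝ) = Ioc 0 t := by
    ext r; simp only [mem_inter_iff, mem_Icc, mem_Ioi, mem_Ioc]
    constructor
    · rintro ⟨⟨_, h2⟩, h3⟩; exact ⟨h3, h2⟩
    · rintro ⟨h2, h3⟩; exact ⟨⟨h2.le, h3⟩, h2⟩
  rw [h1]
  have h2 : ∀ r ∈ Ioc (0:ℝ) t, ENNReal.ofReal r * ENNReal.ofReal (1/r)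
      = ENNReal.ofReal 1 := by
    intro r hr
    rw [← ENNReal.ofReal_mul hr.1.le]
    congr 1
    rw [mul_one_div, div_self hr.1.ne']
  rw [setLIntegral_congr_fun measurableSet_Ioc h2]
  rw [setLIntegral_const, Real.volume_Ioc]
  simp [ht]

lemma two_pi_ne_zero' : (2 : ℝ≥0∞) * ENNReal.ofReal π ≠ 0 :=
  mul_ne_zero two_ne_zero (ENNReal.ofReal_pos.2 Real.pi_pos).ne'

lemma lint_C4 : ∫⁻ z : ℂ in {z | 1 < ‖z‖}, ENNReal.ofReal (1/‖z‖^2) = ⊤ := by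
  have h0 : {z : ℂ | 1 < ‖z‖} = {z : ℂ | ‖z‖ ∈ Ioi 1} := rfl
  have key := lint_radial_set (Ioi 1) measurableSet_Ioi
    (fun r => ENNReal.ofReal (1/r^2)) (by fun_prop)
  rw [h0, key]
  have h1 : Ioi (1:ℝ) ∩ Ioi (0:ℝ) = Ioi 1 := inter_eq_left.2 (Ioi_subset_Ioi zero_le_one)
  rw [h1]
  have h2 : ∀ r ∈ Ioi (1:ℝ), ENNReal.ofReal r * ENNReal.ofReal (1/r^2)
      = ENNReal.ofReal r⁻¹ := by
    intro r hr
    have hr0 : 0 < r := lt_trans one_pos hr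
    rw [← ENNReal.ofReal_mul hr0.le]
    congr 1
    field_simp
  rw [setLIntegral_congr_fun measurableSet_Ioi h2]
  have h3 : ∫⁻ r in Ioi (1:ℝ), ENNReal.ofReal r⁻¹ = ⊤ := by
    by_contra h
    have := (lintegral_ofReal_ne_top_iff_integrable
      (measurable_inv.aestronglyMeasurable) ((ae_restrict_iff' measurableSet_Ioi).2
        (.of_forall fun r hr => inv_nonneg.2 (lt_trans one_pos hr).le))).1 h
    exact not_IntegrableOn_Ioi_inv this
  rw [h3, ENNReal.mul_top two_pi_ne_zero']

lemma lint_C5 {R : ℝ} (hR : 0 < R) :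
    ∫⁻ z : ℂ in {z | R < ‖z‖}, ENNReal.ofReal (1/‖z‖) = ⊤ := by
  have h0 : {z : ℂ | R < ‖z‖} = {z : ℂ | ‖z‖ ∈ Ioi R} := rfl
  have key := lint_radial_set (Ioi R) measurableSet_Ioi
    (fun r => ENNReal.ofReal (1/r)) (by fun_prop)
  rw [h0, key]
  have h1 : Ioi R ∩ Ioi (0:ℝ) = Ioi R := inter_eq_left.2 (Ioi_subset_Ioi hR.le)
  rw [h1]
  have h2 : ∀ r ∈ Ioi R, ENNReal.ofReal r * ENNReal.ofReal (1/r)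
      = ENNReal.ofReal 1 := by
    intro r hr
    have hr0 : 0 < r := hR.trans hr
    rw [← ENNReal.ofReal_mul hr0.le]
    congr 1
    rw [mul_one_div, div_self hr0.ne']
  rw [setLIntegral_congr_fun measurableSet_Ioi h2]
  rw [setLIntegral_const, Real.volume_Ioi, ENNReal.mul_top (by simp),
    ENNReal.mul_top two_pi_ne_zero']

lemma lint_C3' (w : ℂ) {t : ℝ} (ht : 0 ≤ t) :
    ∫⁻ z : ℂ in Metric.closedBall w t, ENNReal.ofReal (1/‖w - z‖)
      ≤ (2 * ENNReal.ofReal π) * ENNReal.ofReal t := by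
  have h0 : ∫⁻ z : ℂ in Metric.closedBall w t, ENNReal.ofReal (1/‖w - z‖)
      = ∫⁻ z : ℂ, (Metric.closedBall w t).indicator
          (fun z => ENNReal.ofReal (1/‖w - z‖)) z := by
    rw [lintegral_indicator measurableSet_closedBall]
  have h1 : ∀ u : ℂ, (Metric.closedBall w t).indicator
      (fun z => ENNReal.ofReal (1/‖w - z‖)) (u + w)
      = (Metric.closedBall (0:ℂ) t).indicator (fun u => ENNReal.ofReal (1/‖u‖)) u := by
    intro u
    have hmem : u + w ∈ Metric.closedBall w t ↔ u ∈ Metric.closedBall (0:ℂ) t := by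
      simp [Metric.mem_closedBall, dist_eq_norm]
    by_cases hu : u ∈ Metric.closedBall (0:ℂ) t
    · rw [indicator_of_mem (hmem.2 hu), indicator_of_mem hu]
      have : w - (u + w) = -u := by ring
      rw [this, norm_neg]
    · rw [indicator_of_notMem (fun h => hu (hmem.1 h)), indicator_of_notMem hu]
  calc ∫⁻ z : ℂ in Metric.closedBall w t, ENNReal.ofReal (1/‖w - z‖)
      = ∫⁻ u : ℂ, (Metric.closedBall w t).indicator
          (fun z => ENNReal.ofReal (1/‖w - z‖)) (u + w) := by
        rw [h0, lintegral_add_right_eq_self]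
    _ = ∫⁻ u : ℂ in Metric.closedBall (0:ℂ) t, ENNReal.ofReal (1/‖u‖) := by
        rw [lintegral_congr h1, lintegral_indicator measurableSet_closedBall]
    _ ≤ (2 * ENNReal.ofReal π) * ENNReal.ofReal t := lint_C3 ht

lemma Ibound (w : ℂ) :
    ∫⁻ z : ℂ in {z : ℂ | 1 < ‖z‖}, ENNReal.ofReal (‖w‖^2/(‖z‖^2 * ‖w - z‖))
      ≤ (2 * ENNReal.ofReal π)
        * ENNReal.ofReal (2*(‖w‖ * max (Real.log ‖w‖) 0) + 13*‖w‖ + 1) := by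
  set r : ℝ := ‖w‖ with hr
  have hr0 : 0 ≤ r := norm_nonneg w
  set A : Set ℂ := {z : ℂ | 1 < ‖z‖ ∧ ‖z‖ < r/2} with hA
  set T : Set ℂ := Metric.closedBall w (3*r) ∩ {z : ℂ | r/2 ≤ ‖z‖ ∧ 1 < ‖z‖} with hT
  set C : Set ℂ := {z : ℂ | max 1 (2*r) < ‖z‖} with hC
  have hcover : {z : ℂ | 1 < ‖z‖} ⊆ (A ∪ T) ∪ C := by
    intro z hz
    rcases lt_or_ge (max 1 (2*r)) ‖z‖ with h | h
    · exact Or.inr h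
    rcases lt_or_ge ‖z‖ (r/2) with h2 | h2
    · exact Or.inl (Or.inl ⟨hz, h2⟩)
    · refine Or.inl (Or.inr ⟨?_, h2, hz⟩)
      rw [Metric.mem_closedBall, dist_eq_norm]
      have hz2 : ‖z‖ ≤ 2*r := by
        rcases le_or_gt (2*r) 1 with h3 | h3
        · exact absurd (lt_of_lt_of_le hz (h.trans (max_le le_rfl h3))) (lt_irrefl 1)
        · exact h.trans (max_le h3.le le_rfl)
      calc ‖z - w‖ ≤ ‖z‖ + ‖w‖ := norm_sub_le z w
        _ ≤ 2*r + r := by rw [← hr]; linarith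
        _ = 3*r := by ring
  have hIm : ∀ s : Set ℂ, ∫⁻ z in s, ENNReal.ofReal (‖w‖^2/(‖z‖^2 * ‖w - z‖)) ∂volume
      = ∫⁻ z in s, ENNReal.ofReal (r^2/(‖z‖^2 * ‖w - z‖)) ∂volume := fun s => rfl
  -- region A bound
  have hA_bound : ∫⁻ z in A, ENNReal.ofReal (r^2/(‖z‖^2 * ‖w - z‖)) ∂volume
      ≤ (2 * ENNReal.ofReal π) * ENNReal.ofReal (2*r*Real.log (max (r/2) 1)) := by
    have hAm : MeasurableSet A :=
      (measurableSet_lt measurable_const measurable_norm).inter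
        (measurableSet_lt measurable_norm measurable_const)
    have hpt : ∀ z ∈ A, ENNReal.ofReal (r^2/(‖z‖^2 * ‖w - z‖))
        ≤ ENNReal.ofReal (2*r) * ENNReal.ofReal (1/‖z‖^2) := by
      intro z hz
      obtain ⟨hz1, hz2⟩ := hz
      have hd : r/2 ≤ ‖w - z‖ := by
        calc r/2 = r - r/2 := by ring
        _ ≤ ‖w‖ - ‖z‖ := by simp only [hr]; linarith [hz2]
        _ ≤ ‖w - z‖ := by
            have := norm_sub_norm_le w z
            linarith [this]
      have hz0 : (0:ℝ) < ‖z‖ := lt_trans one_pos hz1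
      rw [← ENNReal.ofReal_mul (by positivity)]
      refine ENNReal.ofReal_le_ofReal ?_
      have hrpos : 0 < r := by
        by_contra h
        push_neg at h
        have : ‖z‖ < 0 := lt_of_lt_of_le hz2 (by linarith)
        exact absurd this (not_lt.2 (norm_nonneg z))
      calc r^2/(‖z‖^2 * ‖w - z‖) ≤ r^2/(‖z‖^2 * (r/2)) := by
            apply div_le_div_of_nonneg_left (by positivity) (by positivity)
            apply mul_le_mul_of_nonneg_left hd (by positivity)
        _ = 2*r * (1/‖z‖^2) := by
            rw [mul_one_div, div_eq_div_iff (by positivity) (by positivity)]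
            ring
    calc ∫⁻ z in A, ENNReal.ofReal (r^2/(‖z‖^2 * ‖w - z‖)) ∂volume
        ≤ ∫⁻ z in A, ENNReal.ofReal (2*r) * ENNReal.ofReal (1/‖z‖^2) ∂volume :=
          setLIntegral_mono (by fun_prop) hpt
      _ = ENNReal.ofReal (2*r) * ∫⁻ z in A, ENNReal.ofReal (1/‖z‖^2) ∂volume :=
          lintegral_const_mul _ (by fun_prop)
      _ ≤ ENNReal.ofReal (2*r) * ((2 * ENNReal.ofReal π) * ENNReal.ofReal (Real.log (max (r/2) 1))) :=
          mul_le_mul_right (lint_C2 (r/2)) _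
      _ = (2 * ENNReal.ofReal π) * ENNReal.ofReal (2*r*Real.log (max (r/2) 1)) := by
          rw [ENNReal.ofReal_mul (show (0:ℝ) ≤ 2*r by positivity),
            ENNReal.ofReal_mul (show (0:ℝ) ≤ 2 by norm_num), ENNReal.ofReal_ofNat]
          ring
  -- region T bound
  have hT_bound : ∫⁻ z in T, ENNReal.ofReal (r^2/(‖z‖^2 * ‖w - z‖)) ∂volume
      ≤ (2 * ENNReal.ofReal π) * ENNReal.ofReal (12*r) := by
    have hTm : MeasurableSet T :=
      measurableSet_closedBall.inter
        ((measurableSet_le measurable_const measurable_norm).inter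
          (measurableSet_lt measurable_const measurable_norm))
    have hpt : ∀ z ∈ T, ENNReal.ofReal (r^2/(‖z‖^2 * ‖w - z‖))
        ≤ ENNReal.ofReal 4 * ENNReal.ofReal (1/‖w - z‖) := by
      intro z hz
      obtain ⟨_, hz2, hz3⟩ := hz
      have hz0 : (0:ℝ) < ‖z‖ := lt_trans one_pos hz3
      rw [← ENNReal.ofReal_mul (by norm_num)]
      refine ENNReal.ofReal_le_ofReal ?_
      rcases eq_or_lt_of_le (norm_nonneg (w - z)) with hd | hd
      · rw [← hd]
        simp
      · have h4 : r^2 ≤ 4 * ‖z‖^2 := by nlinarith [hz2, norm_nonneg z]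
        rw [div_le_iff₀ (by positivity)]
        calc r^2 ≤ 4*‖z‖^2 := h4
          _ = 4 * (1/‖w-z‖) * (‖z‖^2 * ‖w-z‖) := by
              have hdd : ‖w-z‖ * (1/‖w-z‖) = 1 := mul_one_div_cancel hd.ne'
              calc 4*‖z‖^2 = 4*‖z‖^2 * (‖w-z‖ * (1/‖w-z‖)) := by rw [hdd, mul_one]
                _ = 4 * (1/‖w-z‖) * (‖z‖^2 * ‖w-z‖) := by ring
    calc ∫⁻ z in T, ENNReal.ofReal (r^2/(‖z‖^2 * ‖w - z‖)) ∂volume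
        ≤ ∫⁻ z in T, ENNReal.ofReal 4 * ENNReal.ofReal (1/‖w - z‖) ∂volume :=
          setLIntegral_mono (by fun_prop) hpt
      _ ≤ ∫⁻ z in Metric.closedBall w (3*r), ENNReal.ofReal 4 * ENNReal.ofReal (1/‖w - z‖) ∂volume := by
          refine lintegral_mono_set (inter_subset_left)
      _ = ENNReal.ofReal 4 * ∫⁻ z in Metric.closedBall w (3*r), ENNReal.ofReal (1/‖w - z‖) ∂volume :=
          lintegral_const_mul _ (by fun_prop)
      _ ≤ ENNReal.ofReal 4 * ((2 * ENNReal.ofReal π) * ENNReal.ofReal (3*r)) :=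
          mul_le_mul_right (lint_C3' w (by positivity)) _
      _ = (2 * ENNReal.ofReal π) * ENNReal.ofReal (12*r) := by
          rw [← mul_assoc, mul_comm (ENNReal.ofReal 4), mul_assoc,
            ← ENNReal.ofReal_mul (by norm_num : (0:ℝ) ≤ 4),
            show (4:ℝ)*(3*r) = 12*r by ring]
  -- region C bound
  have hC_bound : ∫⁻ z in C, ENNReal.ofReal (r^2/(‖z‖^2 * ‖w - z‖)) ∂volume
      ≤ (2 * ENNReal.ofReal π) * ENNReal.ofReal (r + 1) := by
    have hpt : ∀ z ∈ C, ENNReal.ofReal (r^2/(‖z‖^2 * ‖w - z‖))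
        ≤ ENNReal.ofReal (2*r^2) * ENNReal.ofReal (1/‖z‖^3) := by
      intro z hz
      have hz1 : (1:ℝ) < ‖z‖ := lt_of_le_of_lt (le_max_left _ _) hz
      have hz2 : 2*r < ‖z‖ := lt_of_le_of_lt (le_max_right _ _) hz
      have hz0 : (0:ℝ) < ‖z‖ := lt_trans one_pos hz1
      have hd : ‖z‖/2 ≤ ‖w - z‖ := by
        have := norm_sub_norm_le z w
        have h1 : ‖z‖ - r ≤ ‖z - w‖ := by simp only [hr] at *; linarith
        rw [norm_sub_rev] at h1
        linarith
      rw [← ENNReal.ofReal_mul (by positivity)]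
      refine ENNReal.ofReal_le_ofReal ?_
      calc r^2/(‖z‖^2 * ‖w - z‖) ≤ r^2/(‖z‖^2 * (‖z‖/2)) := by
            apply div_le_div_of_nonneg_left (by positivity) (by positivity)
            apply mul_le_mul_of_nonneg_left hd (by positivity)
        _ = 2*r^2 * (1/‖z‖^3) := by
            rw [mul_one_div, div_eq_div_iff (by positivity) (by positivity)]
            ring
    calc ∫⁻ z in C, ENNReal.ofReal (r^2/(‖z‖^2 * ‖w - z‖)) ∂volume
        ≤ ∫⁻ z in C, ENNReal.ofReal (2*r^2) * ENNReal.ofReal (1/‖z‖^3) ∂volume :=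
          setLIntegral_mono (by fun_prop) hpt
      _ = ENNReal.ofReal (2*r^2) * ∫⁻ z in C, ENNReal.ofReal (1/‖z‖^3) ∂volume :=
          lintegral_const_mul _ (by fun_prop)
      _ = ENNReal.ofReal (2*r^2) * ((2 * ENNReal.ofReal π)
            * ENNReal.ofReal (1/max 1 (2*r))) := by
          rw [lint_C1 (lt_of_lt_of_le one_pos (le_max_left _ _))]
      _ ≤ (2 * ENNReal.ofReal π) * ENNReal.ofReal (r + 1) := by
          rw [← mul_assoc, mul_comm (ENNReal.ofReal (2*r^2)), mul_assoc]
          refine mul_le_mul_right ?_ _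
          rw [← ENNReal.ofReal_mul (by positivity)]
          refine ENNReal.ofReal_le_ofReal ?_
          rcases le_or_gt 1 (2*r) with h | h
          · rw [max_eq_right h]
            rw [mul_one_div, div_le_iff₀ (by linarith)]
            nlinarith
          · rw [max_eq_left h.le]
            nlinarith
  -- combine
  calc ∫⁻ z in {z : ℂ | 1 < ‖z‖}, ENNReal.ofReal (‖w‖^2/(‖z‖^2 * ‖w - z‖)) ∂volume
      ≤ ∫⁻ z in (A ∪ T) ∪ C, ENNReal.ofReal (r^2/(‖z‖^2 * ‖w - z‖)) ∂volume := by
        rw [hIm]; exact lintegral_mono_set hcover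
    _ ≤ (∫⁻ z in A ∪ T, ENNReal.ofReal (r^2/(‖z‖^2 * ‖w - z‖)) ∂volume)
          + ∫⁻ z in C, ENNReal.ofReal (r^2/(‖z‖^2 * ‖w - z‖)) ∂volume :=
        lintegral_union_le _ _ _
    _ ≤ ((∫⁻ z in A, ENNReal.ofReal (r^2/(‖z‖^2 * ‖w - z‖)) ∂volume)
          + ∫⁻ z in T, ENNReal.ofReal (r^2/(‖z‖^2 * ‖w - z‖)) ∂volume)
          + ∫⁻ z in C, ENNReal.ofReal (r^2/(‖z‖^2 * ‖w - z‖)) ∂volume :=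
        add_le_add_left (lintegral_union_le _ _ _) _
    _ ≤ ((2 * ENNReal.ofReal π) * ENNReal.ofReal (2*r*Real.log (max (r/2) 1))
          + (2 * ENNReal.ofReal π) * ENNReal.ofReal (12*r))
          + (2 * ENNReal.ofReal π) * ENNReal.ofReal (r + 1) :=
        add_le_add (add_le_add hA_bound hT_bound) hC_bound
    _ ≤ (2 * ENNReal.ofReal π)
          * ENNReal.ofReal (2*(‖w‖ * max (Real.log ‖w‖) 0) + 13*‖w‖ + 1) := by
        rw [← mul_add, ← mul_add]
        refine mul_le_mul_right ?_ _
        have hlog : 2*r*Real.log (max (r/2) 1) ≤ 2*(r * max (Real.log r) 0) := by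
          rcases le_or_gt r 2 with h | h
          · rw [show max (r/2) 1 = 1 from max_eq_right (by linarith), Real.log_one]
            have : 0 ≤ r * max (Real.log r) 0 := mul_nonneg hr0 (le_max_right _ _)
            linarith
          · rw [max_eq_left (by linarith)]
            have h1 : Real.log (r/2) ≤ Real.log r :=
              Real.log_le_log (by linarith) (by linarith)
            have h2 : Real.log r ≤ max (Real.log r) 0 := le_max_left _ _
            have h3 : 0 ≤ Real.log (r/2) := Real.log_nonneg (by linarith)
            nlinarith
        calc ENNReal.ofReal (2*r*Real.log (max (r/2) 1)) + ENNReal.ofReal (12*r)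
              + ENNReal.ofReal (r+1)
            ≤ ENNReal.ofReal (2*(r * max (Real.log r) 0)) + ENNReal.ofReal (12*r)
              + ENNReal.ofReal (r+1) :=
              add_le_add_left (add_le_add_left (ENNReal.ofReal_le_ofReal hlog) _) _
          _ = ENNReal.ofReal (2*(r * max (Real.log r) 0) + 12*r + (r+1)) := by
              rw [← ENNReal.ofReal_add (by positivity) (by positivity),
                ← ENNReal.ofReal_add (by positivity) (by positivity)]
          _ ≤ ENNReal.ofReal (2*(‖w‖ * max (Real.log ‖w‖) 0) + 13*‖w‖ + 1) := by
              refine ENNReal.ofReal_le_ofReal ?_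
              simp only [← hr]
              linarith

lemma log_ten_ge_one : (1:ℝ) ≤ Real.log 10 := by
  rw [Real.le_log_iff_exp_le (by norm_num)]
  exact (Real.exp_one_lt_d9.le).trans (by norm_num)

lemma int_norm (ρ : Measure ℂ) [IsFiniteMeasure ρ]
    (hmu : IntegrableOn (fun w : ℂ => ‖w‖ * Real.log ‖w‖) {w : ℂ | 10 < ‖w‖} ρ) :
    Integrable (fun w : ℂ => ‖w‖) ρ := by
  have hs : MeasurableSet {w : ℂ | 10 < ‖w‖} :=
    measurableSet_lt measurable_const measurable_norm
  have h1 : IntegrableOn (fun w : ℂ => ‖w‖) {w : ℂ | 10 < ‖w‖} ρ := by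
    refine hmu.mono' measurable_norm.aestronglyMeasurable ?_
    filter_upwards [ae_restrict_mem hs] with w hw
    have h10 : (10:ℝ) < ‖w‖ := hw
    have hlog : 1 ≤ Real.log ‖w‖ :=
      log_ten_ge_one.trans (Real.log_le_log (by norm_num) h10.le)
    rw [Real.norm_eq_abs, abs_of_nonneg (norm_nonneg w)]
    nlinarith [norm_nonneg w]
  have h2 : IntegrableOn (fun w : ℂ => ‖w‖) {w : ℂ | 10 < ‖w‖}ᶜ ρ := by
    refine Measure.integrableOn_of_bounded (M := (10:ℝ)) (measure_ne_top _ _)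
      measurable_norm.aestronglyMeasurable ?_
    filter_upwards [ae_restrict_mem hs.compl] with w hw
    rw [Real.norm_eq_abs, abs_of_nonneg (norm_nonneg w)]
    exact le_of_not_gt hw
  have := integrableOn_union.2 ⟨h1, h2⟩
  rwa [union_compl_self, integrableOn_univ] at this

lemma int_G (ρ : Measure ℂ) [IsFiniteMeasure ρ]
    (hmu : IntegrableOn (fun w : ℂ => ‖w‖ * Real.log ‖w‖) {w : ℂ | 10 < ‖w‖} ρ) :
    Integrable (fun w : ℂ => 2*(‖w‖ * max (Real.log ‖w‖) 0) + 13*‖w‖ + 1) ρ := by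
  have hs : MeasurableSet {w : ℂ | 10 < ‖w‖} :=
    measurableSet_lt measurable_const measurable_norm
  have hGm : Measurable (fun w : ℂ => 2*(‖w‖ * max (Real.log ‖w‖) 0) + 13*‖w‖ + 1) := by
    refine (((measurable_const.mul (measurable_norm.mul
      ((Real.measurable_log.comp measurable_norm).max measurable_const))).add
      (measurable_const.mul measurable_norm)).add measurable_const)
  have h1 : IntegrableOn (fun w : ℂ => 2*(‖w‖ * max (Real.log ‖w‖) 0) + 13*‖w‖ + 1)
      {w : ℂ | 10 < ‖w‖} ρ := by
    refine (hmu.const_mul 16).mono' hGm.aestronglyMeasurable ?_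
    filter_upwards [ae_restrict_mem hs] with w hw
    have h10 : (10:ℝ) < ‖w‖ := hw
    have hlog : 1 ≤ Real.log ‖w‖ :=
      log_ten_ge_one.trans (Real.log_le_log (by norm_num) h10.le)
    have hmax : max (Real.log ‖w‖) 0 = Real.log ‖w‖ := max_eq_left (by linarith)
    rw [Real.norm_eq_abs, abs_of_nonneg (by positivity), hmax]
    nlinarith [norm_nonneg w]
  have h2 : IntegrableOn (fun w : ℂ => 2*(‖w‖ * max (Real.log ‖w‖) 0) + 13*‖w‖ + 1)
      {w : ℂ | 10 < ‖w‖}ᶜ ρ := by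
    refine Measure.integrableOn_of_bounded (measure_ne_top _ _)
      hGm.aestronglyMeasurable (M := 2*(10*3) + 13*10 + 1) ?_
    filter_upwards [ae_restrict_mem hs.compl] with w hw
    have h10 : ‖w‖ ≤ 10 := le_of_not_gt hw
    have hmax : max (Real.log ‖w‖) 0 ≤ 3 := by
      rcases le_or_gt (Real.log ‖w‖) 0 with h | h
      · rw [max_eq_right h]; norm_num
      · rw [max_eq_left h.le]
        have hw1 : (1:ℝ) < ‖w‖ := by
          by_contra hc
          push_neg at hc
          exact absurd (Real.log_nonpos (norm_nonneg w) hc) (not_le.2 h)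
        have : Real.log ‖w‖ ≤ Real.log 10 := Real.log_le_log (by linarith) h10
        have hl10 : Real.log 10 ≤ 3 := by
          rw [Real.log_le_iff_le_exp (by norm_num)]
          have h1 := Real.exp_one_gt_d9
          calc (10:ℝ) ≤ 2.7182818283^3 := by norm_num
            _ ≤ (Real.exp 1)^3 :=
                pow_le_pow_left₀ (by norm_num) Real.exp_one_gt_d9.le 3
            _ = Real.exp 3 := by
                rw [Real.exp_one_pow]
                norm_num
        linarith
    rw [Real.norm_eq_abs, abs_of_nonneg (by positivity)]
    have h0 : (0:ℝ) ≤ max (Real.log ‖w‖) 0 := le_max_right _ _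
    nlinarith [norm_nonneg w]
  have := integrableOn_union.2 ⟨h1, h2⟩
  rwa [union_compl_self, integrableOn_univ] at this

lemma key_lt_top (ρ : Measure ℂ) [IsFiniteMeasure ρ]
    (hmu : IntegrableOn (fun w : ℂ => ‖w‖ * Real.log ‖w‖) {w : ℂ | 10 < ‖w‖} ρ) :
    ∫⁻ z in {z : ℂ | 1 < ‖z‖}, (∫⁻ w, ENNReal.ofReal (‖w‖^2/(‖z‖^2 * ‖w - z‖)) ∂ρ) ∂volume
      < ⊤ := by
  have hker : Measurable (fun p : ℂ × ℂ => ENNReal.ofReal (‖p.2‖^2/(‖p.1‖^2 * ‖p.2 - p.1‖))) := by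
    fun_prop
  have hswap : ∫⁻ z in {z : ℂ | 1 < ‖z‖},
        (∫⁻ w, ENNReal.ofReal (‖w‖^2/(‖z‖^2 * ‖w - z‖)) ∂ρ) ∂volume
      = ∫⁻ w, (∫⁻ z in {z : ℂ | 1 < ‖z‖},
          ENNReal.ofReal (‖w‖^2/(‖z‖^2 * ‖w - z‖)) ∂volume) ∂ρ :=
    lintegral_lintegral_swap hker.aemeasurable
  rw [hswap]
  have hG := int_G ρ hmu
  calc ∫⁻ w, (∫⁻ z in {z : ℂ | 1 < ‖z‖},
        ENNReal.ofReal (‖w‖^2/(‖z‖^2 * ‖w - z‖)) ∂volume) ∂ρ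
      ≤ ∫⁻ w, (2 * ENNReal.ofReal π)
          * ENNReal.ofReal (2*(‖w‖ * max (Real.log ‖w‖) 0) + 13*‖w‖ + 1) ∂ρ := by
        exact lintegral_mono fun w => Ibound w
    _ = (2 * ENNReal.ofReal π) * ∫⁻ w,
          ENNReal.ofReal (2*(‖w‖ * max (Real.log ‖w‖) 0) + 13*‖w‖ + 1) ∂ρ := by
        rw [lintegral_const_mul _ (by
          refine Measurable.ennreal_ofReal ?_
          exact (((measurable_const.mul (measurable_norm.mul
            ((Real.measurable_log.comp measurable_norm).max measurable_const))).add
            (measurable_const.mul measurable_norm)).add measurable_const))]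
    _ < ⊤ := by
        refine ENNReal.mul_lt_top ?_ ?_
        · exact ENNReal.mul_lt_top (by norm_num) ENNReal.ofReal_lt_top
        calc ∫⁻ w, ENNReal.ofReal (2*(‖w‖ * max (Real.log ‖w‖) 0) + 13*‖w‖ + 1) ∂ρ
            = ∫⁻ w, ‖(2*(‖w‖ * max (Real.log ‖w‖) 0) + 13*‖w‖ + 1 : ℝ)‖₊ ∂ρ := by
              refine lintegral_congr fun w => ?_
              rw [← enorm_eq_nnnorm, ← ofReal_norm, Real.norm_eq_abs,
                abs_of_nonneg (by positivity)]
          _ < ⊤ := hG.2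

/-- Let `μ` be a finite complex Borel measure on `ℂ` (polar decomposition `dμ = g dρ`,
`ρ = |μ|` finite positive, `‖g‖ = 1`) with `∫_{|z|>10} |z| log|z| d|μ|(z) < ∞`.  Set
`A = ∫ dμ` and `B = ∫ w dμ(w)`.  Then the Cauchy transform `μ̂(z) = ∫ dμ(w)/(w-z)` is
absolutely integrable on `{|z|>1}` w.r.t. planar Lebesgue measure iff `A = 0` and `B = 0`. -/
theorem stmt4 (ρ : Measure ℂ) [IsFiniteMeasure ρ] (g : ℂ → ℂ)
    (hg_meas : Measurable g) (hg_norm : ∀ w, ‖g w‖ = 1)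
    (hmu : IntegrableOn (fun w : ℂ => ‖w‖ * Real.log ‖w‖) {w : ℂ | 10 < ‖w‖} ρ) :
    IntegrableOn (fun z : ℂ => ∫ w, g w / (w - z) ∂ρ) {z : ℂ | 1 < ‖z‖} volume ↔
      ((∫ w, g w ∂ρ) = 0 ∧ (∫ w, w * g w ∂ρ) = 0) := by
  have hSm : MeasurableSet {z : ℂ | 1 < ‖z‖} :=
    measurableSet_lt measurable_const measurable_norm
  set A : ℂ := ∫ w, g w ∂ρ with hAdef
  set B : ℂ := ∫ w, w * g w ∂ρ with hBdef
  have hgInt : Integrable g ρ :=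
    (integrable_const (1:ℝ)).mono' hg_meas.aestronglyMeasurable
      (Filter.Eventually.of_forall fun w => (hg_norm w).le)
  have hwg : Integrable (fun w => w * g w) ρ := by
    refine (int_norm ρ hmu).mono' (measurable_id.mul hg_meas).aestronglyMeasurable
      (Filter.Eventually.of_forall fun w => ?_)
    rw [norm_mul, hg_norm, mul_one]
  have hk3m : Measurable (fun p : ℂ × ℂ => (p.2^2 * g p.2)/(p.1^2*(p.2 - p.1))) :=
    ((measurable_snd.pow_const 2).mul (hg_meas.comp measurable_snd)).div
      ((measurable_fst.pow_const 2).mul (measurable_snd.sub measurable_fst))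
  have hnormk3 : ∀ z w : ℂ, (‖(w^2 * g w)/(z^2*(w - z))‖₊ : ℝ≥0∞)
      = ENNReal.ofReal (‖w‖^2/(‖z‖^2 * ‖w - z‖)) := by
    intro z w
    rw [← enorm_eq_nnnorm, ← ofReal_norm]
    congr 1
    rw [norm_div, norm_mul, norm_mul, norm_pow, norm_pow, hg_norm, mul_one]
  set Hf : ℂ → ℂ := fun z => ∫ w, (w^2 * g w)/(z^2*(w - z)) ∂ρ with hHfdef
  set Φ : ℂ → ℝ≥0∞ := fun z => ∫⁻ w, ENNReal.ofReal (‖w‖^2/(‖z‖^2 * ‖w - z‖)) ∂ρ with hΦdef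
  have hΦm : Measurable Φ := by
    apply Measurable.lintegral_prod_right'
      (f := fun p : ℂ × ℂ => ENNReal.ofReal (‖p.2‖^2/(‖p.1‖^2 * ‖p.2 - p.1‖)))
    fun_prop
  have hkey := key_lt_top ρ hmu
  have hΦae : ∀ᵐ z ∂(volume.restrict {z : ℂ | 1 < ‖z‖}), Φ z < ⊤ :=
    ae_lt_top hΦm hkey.ne
  have hatoms : ∀ᵐ z : ℂ ∂volume, ρ {z} = 0 := by
    have hcount : Set.Countable {t : ℂ | 0 < ρ {a : ℂ | a = t}} :=
      Measure.countable_meas_level_set_pos measurable_id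
    rw [ae_iff]
    refine measure_mono_null (fun z hz => ?_) (hcount.measure_zero _)
    simp only [mem_setOf_eq] at hz ⊢
    have : {a : ℂ | a = z} = {z} := by ext a; simp
    rw [this]
    exact pos_iff_ne_zero.2 hz
  -- the key identity
  have hident : (fun z : ℂ => ∫ w, g w / (w - z) ∂ρ)
      =ᵐ[volume.restrict {z : ℂ | 1 < ‖z‖}] fun z => -(A / z) - B / z^2 + Hf z := by
    filter_upwards [hΦae, ae_restrict_of_ae hatoms, ae_restrict_mem hSm] with z hΦz hz hzS
    have hz1 : (1:ℝ) < ‖z‖ := hzS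
    have hz0 : z ≠ 0 := by
      intro h; rw [h, norm_zero] at hz1; linarith
    have hnez : ∀ᵐ w ∂ρ, w ≠ z := by
      rw [ae_iff]
      have : {w : ℂ | ¬ w ≠ z} = {z} := by ext a; simp
      rw [this]; exact hz
    have hint3 : Integrable (fun w => (w^2 * g w)/(z^2*(w - z))) ρ := by
      refine ⟨(hk3m.comp (measurable_prodMk_left (x := z))).aestronglyMeasurable, ?_⟩
      show ∫⁻ w, (‖(w^2 * g w)/(z^2*(w - z))‖₊ : ℝ≥0∞) ∂ρ < ⊤
      rw [lintegral_congr fun w => hnormk3 z w]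
      exact hΦz
    have hi1 : Integrable (fun w => g w / z) ρ := hgInt.div_const z
    have hi2 : Integrable (fun w => (w * g w) / z^2) ρ := hwg.div_const (z^2)
    have heqw : (fun w : ℂ => g w/(w-z)) =ᵐ[ρ]
        fun w => (-(g w / z) - (w * g w)/z^2) + (w^2*g w)/(z^2*(w-z)) := by
      filter_upwards [hnez] with w hw
      have hwz : w - z ≠ 0 := sub_ne_zero.2 hw
      field_simp
      ring
    have hi1n : Integrable (fun w => -(g w / z)) ρ := hi1.neg
    have hi12 : Integrable (fun w => -(g w / z) - w * g w / z^2) ρ := hi1n.sub hi2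
    rw [integral_congr_ae heqw, integral_add hi12 hint3,
      integral_sub hi1n hi2, integral_neg, integral_div, integral_div]
  -- H is integrable on S
  have hHint : IntegrableOn Hf {z : ℂ | 1 < ‖z‖} volume := by
    refine ⟨(hk3m.stronglyMeasurable.integral_prod_right').aestronglyMeasurable.restrict, ?_⟩
    show ∫⁻ z in {z : ℂ | 1 < ‖z‖}, (‖Hf z‖₊ : ℝ≥0∞) ∂volume < ⊤
    refine lt_of_le_of_lt (lintegral_mono fun z => ?_) hkey
    calc (‖Hf z‖₊ : ℝ≥0∞) ≤ ∫⁻ w, (‖(w^2*g w)/(z^2*(w-z))‖₊ : ℝ≥0∞) ∂ρ :=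
        enorm_integral_le_lintegral_enorm _
      _ = ∫⁻ w, ENNReal.ofReal (‖w‖^2/(‖z‖^2 * ‖w - z‖)) ∂ρ :=
        lintegral_congr fun w => hnormk3 z w
  constructor
  · intro h
    have hG2 : Integrable (fun z : ℂ => A/z + B/z^2)
        (volume.restrict {z : ℂ | 1 < ‖z‖}) := by
      have heq : (fun z : ℂ => Hf z - ∫ w, g w/(w-z) ∂ρ)
          =ᵐ[volume.restrict {z : ℂ | 1 < ‖z‖}] fun z => A/z + B/z^2 := by
        filter_upwards [hident] with z hzid
        rw [hzid]; ring
      exact (hHint.sub h).congr heq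
    have hA : A = 0 := by
      by_contra hA0
      have hAn : (0:ℝ) < ‖A‖ := norm_pos_iff.2 hA0
      set R : ℝ := max 1 (2*‖B‖/‖A‖) with hRdef
      have hR0 : (0:ℝ) < R := lt_of_lt_of_le one_pos (le_max_left _ _)
      have hsub : {z : ℂ | R < ‖z‖} ⊆ {z : ℂ | 1 < ‖z‖} :=
        fun z hz => lt_of_le_of_lt (le_max_left 1 (2*‖B‖/‖A‖)) hz
      have hRm : MeasurableSet {z : ℂ | R < ‖z‖} :=
        measurableSet_lt measurable_const measurable_norm
      have hG2' : Integrable (fun z : ℂ => A/z + B/z^2)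
          (volume.restrict {z : ℂ | R < ‖z‖}) := hG2.mono_measure
        (Measure.restrict_mono hsub le_rfl)
      have hlow : Integrable (fun z : ℂ => ‖A‖/2 * (1/‖z‖))
          (volume.restrict {z : ℂ | R < ‖z‖}) := by
        refine hG2'.norm.mono'
          (measurable_const.mul (measurable_const.div measurable_norm)).aestronglyMeasurable ?_
        filter_upwards [ae_restrict_mem hRm] with z hz
        have hzR : R < ‖z‖ := hz
        have hz1 : (1:ℝ) < ‖z‖ := lt_of_le_of_lt (le_max_left 1 _) hzR
        have hz0 : (0:ℝ) < ‖z‖ := lt_trans one_pos hz1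
        have hz2 : 2*‖B‖/‖A‖ ≤ ‖z‖ := (le_max_right 1 _).trans hzR.le
        have hBb : 2*‖B‖ ≤ ‖A‖ * ‖z‖ := by
          rw [div_le_iff₀ hAn] at hz2
          linarith [hz2]
        rw [Real.norm_eq_abs, abs_of_nonneg (by positivity)]
        have htri : ‖A/z‖ - ‖B/z^2‖ ≤ ‖A/z + B/z^2‖ := by
          have h1 : ‖A/z‖ ≤ ‖A/z + B/z^2‖ + ‖B/z^2‖ := by
            calc ‖A/z‖ = ‖(A/z + B/z^2) - B/z^2‖ := by rw [add_sub_cancel_right]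
              _ ≤ ‖A/z + B/z^2‖ + ‖B/z^2‖ := norm_sub_le _ _
          linarith
        refine le_trans ?_ htri
        rw [norm_div, norm_div, norm_pow]
        rw [div_sub_div _ _ hz0.ne' (by positivity), le_div_iff₀ (by positivity)]
        have h4 : 2*‖B‖*‖z‖ ≤ ‖A‖*‖z‖*‖z‖ := mul_le_mul_of_nonneg_right hBb hz0.le
        have h5 : ‖A‖/2 * (1/‖z‖) * (‖z‖*‖z‖^2) = ‖A‖/2*(‖z‖^2) := by
          calc ‖A‖/2 * (1/‖z‖) * (‖z‖*‖z‖^2) = ‖A‖/2 * ((1/‖z‖)*‖z‖) * ‖z‖^2 := by ring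
            _ = ‖A‖/2*(‖z‖^2) := by rw [one_div_mul_cancel hz0.ne', mul_one]
        rw [h5]
        have hsq : ‖z‖^2 = ‖z‖*‖z‖ := by ring
        nlinarith [h4, hsq]
      have hne := (lintegral_ofReal_ne_top_iff_integrable
        (f := fun z : ℂ => ‖A‖/2 * (1/‖z‖))
        (measurable_const.mul (measurable_const.div measurable_norm)).aestronglyMeasurable
        ((ae_restrict_iff' hRm).2 (Filter.Eventually.of_forall fun z hz => by positivity))).2 hlow
      apply hne
      calc ∫⁻ z in {z : ℂ | R < ‖z‖}, ENNReal.ofReal (‖A‖/2 * (1/‖z‖)) ∂volume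
          = ∫⁻ z in {z : ℂ | R < ‖z‖},
              ENNReal.ofReal (‖A‖/2) * ENNReal.ofReal (1/‖z‖) ∂volume := by
            refine lintegral_congr fun z => ?_
            rw [← ENNReal.ofReal_mul (by positivity)]
        _ = ENNReal.ofReal (‖A‖/2) * ∫⁻ z in {z : ℂ | R < ‖z‖},
              ENNReal.ofReal (1/‖z‖) ∂volume := lintegral_const_mul _ (by fun_prop)
        _ = ⊤ := by
            rw [lint_C5 hR0, ENNReal.mul_top (by
              simp only [ne_eq, ENNReal.ofReal_eq_zero, not_le]
              positivity)]
    have hB : B = 0 := by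
      by_contra hB0
      have hBn : (0:ℝ) < ‖B‖ := norm_pos_iff.2 hB0
      have hG2b : Integrable (fun z : ℂ => B/z^2)
          (volume.restrict {z : ℂ | 1 < ‖z‖}) := by
        refine hG2.congr (Filter.Eventually.of_forall fun z => ?_)
        rw [hA]
        simp
      have hlow2 : Integrable (fun z : ℂ => ‖B‖ * (1/‖z‖^2))
          (volume.restrict {z : ℂ | 1 < ‖z‖}) := by
        refine hG2b.norm.congr (Filter.Eventually.of_forall fun z => ?_)
        show ‖B / z^2‖ = ‖B‖ * (1/‖z‖^2)
        rw [norm_div, norm_pow, div_eq_mul_one_div]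
      have hne := (lintegral_ofReal_ne_top_iff_integrable
        (f := fun z : ℂ => ‖B‖ * (1/‖z‖^2))
        (measurable_const.mul (measurable_const.div (measurable_norm.pow_const 2))).aestronglyMeasurable
        ((ae_restrict_iff' hSm).2 (Filter.Eventually.of_forall fun z hz => by positivity))).2 hlow2
      apply hne
      calc ∫⁻ z in {z : ℂ | 1 < ‖z‖}, ENNReal.ofReal (‖B‖ * (1/‖z‖^2)) ∂volume
          = ∫⁻ z in {z : ℂ | 1 < ‖z‖},
              ENNReal.ofReal ‖B‖ * ENNReal.ofReal (1/‖z‖^2) ∂volume := by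
            refine lintegral_congr fun z => ?_
            rw [← ENNReal.ofReal_mul (by positivity)]
        _ = ENNReal.ofReal ‖B‖ * ∫⁻ z in {z : ℂ | 1 < ‖z‖},
              ENNReal.ofReal (1/‖z‖^2) ∂volume := lintegral_const_mul _ (by fun_prop)
        _ = ⊤ := by
            rw [lint_C4, ENNReal.mul_top (by
              simp only [ne_eq, ENNReal.ofReal_eq_zero, not_le]
              positivity)]
    exact ⟨hA, hB⟩
  · rintro ⟨hA, hB⟩
    have heq : Hf =ᵐ[volume.restrict {z : ℂ | 1 < ‖z‖}]
        fun z : ℂ => ∫ w, g w / (w - z) ∂ρ := by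
      filter_upwards [hident] with z hzid
      rw [hzid, hA, hB]
      simp
    exact hHint.congr heq
end

section
/- For constants $B \ge 0$ and $\gamma > 2$, the integral $\int_{U} \frac{du\,dv}{(u^2+v^2)^{3/2}}$ over the region $U = \{(u,v) \in \mathbb{R}^2 : 0 < u < 1, \; |v| < B u^{\gamma}\}$ is finite. -/
open MeasureTheory

/-- For `B ≥ 0` and `γ > 2`, the integral of `(u²+v²)^{-3/2}` over the cusp-shaped region
`{0 < u < 1, |v| < B·u^γ}` is finite. -/
theorem stmt11 (B γ : ℝ) (hB : 0 ≤ B) (hγ : 2 < γ) :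
    (∫⁻ p in {p : ℝ × ℝ | 0 < p.1 ∧ p.1 < 1 ∧ |p.2| < B * p.1 ^ γ},
        ENNReal.ofReal ((p.1 ^ 2 + p.2 ^ 2) ^ (-(3 : ℝ) / 2)) ∂volume) < ⊤ := by
  set U : Set (ℝ × ℝ) := {p : ℝ × ℝ | 0 < p.1 ∧ p.1 < 1 ∧ |p.2| < B * p.1 ^ γ} with hU
  have hUm : MeasurableSet U := by
    apply MeasurableSet.inter
    · exact measurableSet_lt measurable_const measurable_fst
    apply MeasurableSet.inter
    · exact measurableSet_lt measurable_fst measurable_const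
    · exact measurableSet_lt (measurable_snd.abs)
        (by fun_prop : Measurable fun p : ℝ × ℝ => B * p.1 ^ γ)
  -- pointwise bound
  have hbound : ∀ p ∈ U, ENNReal.ofReal ((p.1 ^ 2 + p.2 ^ 2) ^ (-(3 : ℝ) / 2))
      ≤ ENNReal.ofReal (p.1 ^ (-(3 : ℝ))) := by
    rintro ⟨u, v⟩ ⟨hu0, hu1, hv⟩
    simp only at *
    apply ENNReal.ofReal_le_ofReal
    have h1 : (u ^ 2 : ℝ) ≤ u ^ 2 + v ^ 2 := by nlinarith [sq_nonneg v]
    have h2 : (0:ℝ) < u ^ 2 := by positivity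
    have := Real.rpow_le_rpow_of_nonpos h2 h1 (by norm_num : (-(3:ℝ)/2) ≤ 0)
    calc (u ^ 2 + v ^ 2) ^ (-(3 : ℝ) / 2) ≤ (u ^ 2) ^ (-(3 : ℝ) / 2) := this
      _ = u ^ (-(3:ℝ)) := by
          rw [show (u:ℝ)^2 = u ^ (2:ℝ) by rw [← Real.rpow_natCast u 2]; norm_num,
            ← Real.rpow_mul hu0.le]
          norm_num
  calc (∫⁻ p in U, ENNReal.ofReal ((p.1 ^ 2 + p.2 ^ 2) ^ (-(3 : ℝ) / 2)) ∂volume)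
      ≤ ∫⁻ p in U, ENNReal.ofReal (p.1 ^ (-(3 : ℝ))) ∂volume :=
        setLIntegral_mono' hUm hbound
    _ = ∫⁻ p, U.indicator (fun p => ENNReal.ofReal (p.1 ^ (-(3 : ℝ)))) p ∂volume := by
        rw [lintegral_indicator hUm]
    _ = ∫⁻ u, ∫⁻ v, U.indicator (fun p => ENNReal.ofReal (p.1 ^ (-(3 : ℝ)))) (u, v)
          ∂volume ∂volume := by
        rw [MeasureTheory.Measure.volume_eq_prod, lintegral_prod]
        exact ((Measurable.indicator (by fun_prop) hUm)).aemeasurable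
    _ ≤ ∫⁻ u, (Set.Ioo (0:ℝ) 1).indicator
          (fun u => ENNReal.ofReal (u ^ (-(3 : ℝ))) * ENNReal.ofReal (2 * (B * u ^ γ))) u
          ∂volume := by
        apply lintegral_mono
        intro u
        by_cases hu : u ∈ Set.Ioo (0:ℝ) 1
        · rw [Set.indicator_of_mem hu]
          have : ∀ v, U.indicator (fun p => ENNReal.ofReal (p.1 ^ (-(3 : ℝ)))) (u, v)
              = (Set.Ioo (-(B * u ^ γ)) (B * u ^ γ)).indicator
                  (fun _ => ENNReal.ofReal (u ^ (-(3 : ℝ)))) v := by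
            intro v
            by_cases hv : |v| < B * u ^ γ
            · rw [Set.indicator_of_mem, Set.indicator_of_mem]
              · exact abs_lt.mp hv
              · exact ⟨hu.1, hu.2, hv⟩
            · rw [Set.indicator_of_notMem, Set.indicator_of_notMem]
              · intro hmem
                exact hv (abs_lt.mpr ⟨hmem.1, hmem.2⟩)
              · rintro ⟨-, -, h⟩; exact hv h
          simp_rw [this]
          rw [lintegral_indicator measurableSet_Ioo, setLIntegral_const, Real.volume_Ioo]
          rw [sub_neg_eq_add]
          gcongr
          linarith
        · rw [Set.indicator_of_notMem hu]
          have : ∀ v, U.indicator (fun p => ENNReal.ofReal (p.1 ^ (-(3 : ℝ)))) (u, v) = 0 := by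
            intro v
            apply Set.indicator_of_notMem
            rintro ⟨h1, h2, -⟩
            exact hu ⟨h1, h2⟩
          simp_rw [this]
          simp
    _ = ∫⁻ u in Set.Ioo (0:ℝ) 1, ENNReal.ofReal (u ^ (-(3 : ℝ))) * ENNReal.ofReal (2 * (B * u ^ γ)) ∂volume := by
        rw [lintegral_indicator measurableSet_Ioo]
    _ = ∫⁻ u in Set.Ioo (0:ℝ) 1, ENNReal.ofReal (2 * B * u ^ (γ - 3)) ∂volume := by
        apply setLIntegral_congr_fun measurableSet_Ioo
        intro u hu; beta_reduce
        rw [← ENNReal.ofReal_mul (Real.rpow_nonneg hu.1.le _)]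
        congr 1
        rw [show γ - 3 = -(3:ℝ) + γ by ring, Real.rpow_add hu.1]
        ring
    _ < ⊤ := by
        have hr : (-1:ℝ) < γ - 3 := by linarith
        have hint : IntegrableOn (fun u : ℝ => 2 * B * u ^ (γ - 3)) (Set.Ioo 0 1) := by
          apply Integrable.const_mul
          have := intervalIntegral.intervalIntegrable_rpow' (r := γ - 3) (a := 0) (b := 1) hr
          rwa [intervalIntegrable_iff_integrableOn_Ioo_of_le (by norm_num)] at this
        exact hint.lintegral_lt_top
end

section
/- Let $\Omega \subset \mathbb{C}$ be an open set invariant under a holomorphic map $f$ ($f(\Omega) = \Omega$, $f$ injective on $\Omega$), conformally equivalent to an annulus via $\psi : \{1 < |w| < r\} \to \Omega$ with $f \circ \psi(w) = \psi(\lambda w)$ for an irrational rotation $\lambda$ (unimodular, not a root of unity). Let $L = \bigcap_{1 < r' < r} \overline{\psi(\{1 < |w| < r'\})}$ be the inner boundary component, and suppose $f$ extends holomorphically to a neighborhood $U$ of the compact set $L$ with $|f'(z)| > 2$ for all $z \in U$. Then a contradiction follows; i.e., $f$ cannot satisfy $|f'| > 2$ on any neighborhood of a boundary component of an invariant Herman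 ring. -/
set_option maxHeartbeats 1000000


open Set Function

/-- A boundary component of an invariant Herman ring cannot be expanding.  Suppose
`ψ : {1 < |w| < r} → Ω` is a conformal homeomorphism onto a bounded invariant domain of a
holomorphic map `f` with `f ∘ ψ(w) = ψ(l·w)` for an irrational rotation `l` (unimodular,
not a root of unity), let `L = ⋂_{1<r'<r} closure(ψ({1 < |w| < r'}))` be the inner boundary
component, and suppose `f` is holomorphic on an open neighbourhood `U` of `L` with
`|f'| > 2` on `U`.  Then a contradiction follows. -/
theorem stmt16 (r : ℝ) (hr : 1 < r) (ψ : ℂ → ℂ)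
    (hψ : DifferentiableOn ℂ ψ {w : ℂ | 1 < ‖w‖ ∧ ‖w‖ < r})
    (hinj : InjOn ψ {w : ℂ | 1 < ‖w‖ ∧ ‖w‖ < r})
    (Ω : Set ℂ) (hΩ : Ω = ψ '' {w : ℂ | 1 < ‖w‖ ∧ ‖w‖ < r})
    (hbdd : Bornology.IsBounded Ω)
    (f : ℂ → ℂ) (l : ℂ) (hl : ‖l‖ = 1) (hroot : ∀ n : ℕ, 0 < n → l ^ n ≠ 1)
    (hconj : ∀ w ∈ {w : ℂ | 1 < ‖w‖ ∧ ‖w‖ < r}, f (ψ w) = ψ (l * w))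
    (L : Set ℂ)
    (hL : L = ⋂ r' ∈ Ioo (1 : ℝ) r, closure (ψ '' {w : ℂ | 1 < ‖w‖ ∧ ‖w‖ < r'}))
    (U : Set ℂ) (hU : IsOpen U) (hLU : L ⊆ U)
    (hf : DifferentiableOn ℂ f U)
    (hexp : ∀ z ∈ U, 2 < ‖deriv f z‖) :
    False := by
  classical
  set A : Set ℂ := {w : ℂ | 1 < ‖w‖ ∧ ‖w‖ < r} with hAdef
  have hAopen : IsOpen A := by
    have h1 : IsOpen {w : ℂ | 1 < ‖w‖} := isOpen_lt continuous_const continuous_norm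
    have h2 : IsOpen {w : ℂ | ‖w‖ < r} := isOpen_lt continuous_norm continuous_const
    exact (h1.inter h2)
  have hl1 : l ≠ 1 := by
    have := hroot 1 one_pos
    simpa using this
  -- the rotation angle
  obtain ⟨θ, hθpos, hθl⟩ : ∃ θ : ℝ, 0 < θ ∧ Complex.exp (θ * Complex.I) = l := by
    have habs : (‖l‖ : ℂ) = 1 := by
      have : ‖l‖ = 1 := hl
      rw [this]; norm_num
    have hexparg : Complex.exp (l.arg * Complex.I) = l := by
      have := Complex.norm_mul_exp_arg_mul_I l
      rwa [habs, one_mul] at this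
    have hargne : l.arg ≠ 0 := by
      intro h
      rw [h] at hexparg
      simp at hexparg
      exact hl1 hexparg.symm
    rcases lt_or_gt_of_ne hargne with hneg | hpos
    · refine ⟨l.arg + 2 * Real.pi, ?_, ?_⟩
      · have := Complex.neg_pi_lt_arg l
        have hπ := Real.pi_pos
        linarith
      · push_cast
        rw [add_mul, Complex.exp_add, hexparg, Complex.exp_two_pi_mul_I, mul_one]
    · exact ⟨l.arg, hpos, hexparg⟩
  -- choose a circle inside U
  obtain ⟨s, hs1, hsr, hsU⟩ : ∃ s : ℝ, 1 < s ∧ s < r ∧ ∀ w : ℂ, ‖w‖ = s → ψ w ∈ U := by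
    by_contra hcon
    push_neg at hcon
    -- sequence of radii tending to 1
    have hsk : ∀ k : ℕ, 1 < 1 + (r - 1) / (k + 2) ∧ 1 + (r - 1) / (k + 2) < r := by
      intro k
      have h2 : (0:ℝ) < (k:ℝ) + 2 := by positivity
      constructor
      · have : 0 < (r - 1) / (k + 2) := div_pos (by linarith) h2
        linarith
      · have : (r - 1) / (k + 2) < r - 1 := by
          rw [div_lt_iff₀ h2]
          nlinarith [sub_pos.mpr hr]
        linarith
    choose w hw hwU using fun k : ℕ =>
      hcon (1 + (r - 1) / (k + 2)) (hsk k).1 (hsk k).2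
    have hwA : ∀ k, w k ∈ A := by
      intro k
      refine ⟨?_, ?_⟩ <;> rw [hw k]
      · exact (hsk k).1
      · exact (hsk k).2
    have hmem : ∀ k, ψ (w k) ∈ Ω := by
      intro k; rw [hΩ]; exact ⟨w k, hwA k, rfl⟩
    obtain ⟨a, -, φ, hφ, hlim⟩ := tendsto_subseq_of_bounded hbdd hmem
    have hsk_lim : Filter.Tendsto (fun k : ℕ => 1 + (r - 1) / (k + 2)) Filter.atTop (nhds 1) := by
      have : Filter.Tendsto (fun k : ℕ => (r - 1) / (k + 2)) Filter.atTop (nhds 0) := by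
        apply Filter.Tendsto.div_atTop tendsto_const_nhds
        exact Filter.tendsto_atTop_add_const_right _ 2 tendsto_natCast_atTop_atTop
      have h := Filter.Tendsto.const_add (1:ℝ) this
      simpa using h
    have haL : a ∈ L := by
      rw [hL]
      refine mem_iInter₂.mpr fun r' hr' => ?_
      refine mem_closure_of_tendsto hlim ?_
      have hev : ∀ᶠ k : ℕ in Filter.atTop, 1 + (r - 1) / ((φ k : ℝ) + 2) < r' := by
        have := (hsk_lim.comp (hφ.tendsto_atTop)).eventually_lt_const hr'.1
        simpa using this
      filter_upwards [hev] with k hk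
      refine ⟨w (φ k), ⟨?_, ?_⟩, rfl⟩ <;> rw [hw (φ k)]
      · exact (hsk (φ k)).1
      · exact hk
    have haU : a ∈ U := hLU haL
    have haUc : a ∈ Uᶜ := by
      have hclosed : IsClosed Uᶜ := hU.isClosed_compl
      exact hclosed.mem_of_tendsto hlim (Filter.Eventually.of_forall fun k => hwU (φ k))
    exact haUc haU
  have hs0 : (0:ℝ) < s := by linarith
  -- the circle curve
  set u : ℝ → ℂ := fun τ => (s : ℂ) * Complex.exp (τ * Complex.I) with hu_def
  have hu_norm : ∀ τ, ‖u τ‖ = s := by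
    intro τ
    rw [hu_def]
    simp only [norm_mul, Complex.norm_exp_ofReal_mul_I, mul_one,
      Complex.norm_real, Real.norm_eq_abs]
    exact abs_of_pos hs0
  have huA : ∀ τ, u τ ∈ A := fun τ => ⟨by rw [hu_norm]; exact hs1, by rw [hu_norm]; exact hsr⟩
  set c : ℝ → ℂ := fun τ => ψ (u τ) with hc_def
  have hcU : ∀ τ, c τ ∈ U := fun τ => hsU _ (hu_norm τ)
  -- derivative of u
  have hu' : ∀ τ : ℝ, HasDerivAt u (u τ * Complex.I) τ := by
    intro τ
    have he : HasDerivAt (fun z : ℂ => (s:ℂ) * Complex.exp (z * Complex.I))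
        ((s:ℂ) * (Complex.exp ((τ:ℂ) * Complex.I) * Complex.I)) (τ:ℂ) := by
      have h1 : HasDerivAt (fun z : ℂ => z * Complex.I) Complex.I (τ:ℂ) := by
        simpa using (hasDerivAt_id (τ:ℂ)).mul_const Complex.I
      have h2 := h1.cexp
      have h3 := h2.const_mul (s:ℂ)
      simpa [mul_comm] using h3
    have := he.comp_ofReal
    simpa [hu_def, mul_assoc] using this
  -- derivative of ψ at points of A
  have hψd : ∀ z ∈ A, HasDerivAt ψ (deriv ψ z) z := fun z hz =>
    (hψ.differentiableAt (hAopen.mem_nhds hz)).hasDerivAt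
  -- derivative of c
  set D : ℝ → ℂ := fun τ => (u τ * Complex.I) • deriv ψ (u τ) with hD_def
  have hD : ∀ τ, HasDerivAt c (D τ) τ := by
    intro τ
    exact HasDerivAt.scomp τ (hψd _ (huA τ)) (hu' τ)
  -- functional equation
  have hceq : ∀ τ, c (τ + θ) = f (c τ) := by
    intro τ
    have hu_eq : u (τ + θ) = l * u τ := by
      rw [hu_def]
      simp only
      rw [← hθl]
      push_cast
      rw [add_mul, Complex.exp_add]
      ring
    rw [hc_def]
    simp only
    rw [hu_eq, ← hconj _ (huA τ)]
  -- derivative relation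
  have hDrel : ∀ τ, D (τ + θ) = D τ • deriv f (c τ) := by
    intro τ
    have hfd : HasDerivAt f (deriv f (c τ)) (c τ) :=
      (hf.differentiableAt (hU.mem_nhds (hcU τ))).hasDerivAt
    have h2 : HasDerivAt (f ∘ c) (D τ • deriv f (c τ)) τ := HasDerivAt.scomp τ hfd (hD τ)
    have h1 : HasDerivAt (fun σ : ℝ => c (σ + θ)) (D (τ + θ)) τ := by
      have hid : HasDerivAt (fun σ : ℝ => σ + θ) 1 τ := (hasDerivAt_id τ).add_const θ
      have := HasDerivAt.scomp τ (hD (τ + θ)) hid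
      rw [one_smul] at this
      exact this
    have heq : (fun σ : ℝ => c (σ + θ)) = f ∘ c := funext fun σ => hceq σ
    rw [heq] at h1
    exact h1.unique h2
  have hDgrow : ∀ τ, 2 * ‖D τ‖ ≤ ‖D (τ + θ)‖ := by
    intro τ
    have h2 : 2 < ‖deriv f (c τ)‖ := hexp _ (hcU τ)
    calc 2 * ‖D τ‖ = ‖D τ‖ * 2 := by ring
    _ ≤ ‖D τ‖ * ‖deriv f (c τ)‖ := mul_le_mul_of_nonneg_left h2.le (norm_nonneg _)
    _ = ‖D τ • deriv f (c τ)‖ := (norm_smul _ _).symm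
    _ = ‖D (τ + θ)‖ := by rw [hDrel τ]
  -- continuity of D
  have hu_cont : Continuous u := by
    exact continuous_const.mul ((Complex.continuous_ofReal.mul continuous_const).cexp)
  have hdψ_cont : ContinuousOn (deriv ψ) A :=
    ((hψ.analyticOnNhd hAopen).deriv).continuousOn
  have hD_cont : Continuous D := by
    rw [hD_def]
    exact ((hu_cont.mul continuous_const).smul
      (hdψ_cont.comp_continuous hu_cont huA))
  have hDn_cont : Continuous fun τ => ‖D τ‖ := hD_cont.norm
  have hint : ∀ a b : ℝ, IntervalIntegrable (fun τ => ‖D τ‖) MeasureTheory.volume a b :=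
    fun a b => hDn_cont.intervalIntegrable a b
  -- uniform bound on ‖D‖
  obtain ⟨B, hB⟩ : ∃ B : ℝ, ∀ τ : ℝ, ‖D τ‖ ≤ B := by
    obtain ⟨B, hB⟩ := (isCompact_Icc (a := (0:ℝ)) (b := 2 * Real.pi)).exists_bound_of_continuousOn
      hDn_cont.continuousOn
    refine ⟨B, fun τ => ?_⟩
    have hper : Function.Periodic (fun τ => ‖D τ‖) (2 * Real.pi) := by
      intro τ
      have : u (τ + 2 * Real.pi) = u τ := by
        rw [hu_def]
        simp only
        congr 1
        push_cast
        rw [add_mul, Complex.exp_add, Complex.exp_two_pi_mul_I, mul_one]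
      simp only [hD_def, this]
    obtain ⟨y, hy, hxy⟩ := hper.exists_mem_Ico₀ (by positivity) τ
    rw [hxy]
    have := hB y (Ico_subset_Icc_self hy)
    calc ‖D y‖ ≤ |‖D y‖| := le_abs_self _
    _ ≤ B := by simpa using this
  have hB0 : (0:ℝ) ≤ B := le_trans (norm_nonneg _) (hB 0)
  -- the lengths
  set J : ℕ → ℝ := fun n => ∫ τ in (n * θ)..(n * θ + θ), ‖D τ‖ with hJ_def
  have hJub : ∀ n, J n ≤ B * θ := by
    intro n
    have := intervalIntegral.integral_mono_on (μ := MeasureTheory.volume)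
      (by linarith : (n:ℝ) * θ ≤ n * θ + θ) (hint _ _)
      (intervalIntegrable_const) (fun x _ => hB x)
    calc J n ≤ ∫ _ in (n*θ)..(n*θ+θ), B := this
    _ = B * θ := by
          rw [intervalIntegral.integral_const, smul_eq_mul]
          ring
  have hJgrow : ∀ n, 2 * J n ≤ J (n + 1) := by
    intro n
    have hsub : J (n + 1) = ∫ τ in (n*θ)..(n*θ+θ), ‖D (τ + θ)‖ := by
      simp only [hJ_def]
      rw [intervalIntegral.integral_comp_add_right (fun τ => ‖D τ‖) θ]
      congr 1 <;> push_cast <;> ring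
    rw [hsub]
    have h1 : IntervalIntegrable (fun τ => 2 * ‖D τ‖) MeasureTheory.volume (n*θ) (n*θ+θ) :=
      (continuous_const.mul hDn_cont).intervalIntegrable _ _
    have h2 : IntervalIntegrable (fun τ => ‖D (τ + θ)‖) MeasureTheory.volume (n*θ) (n*θ+θ) :=
      (hDn_cont.comp (continuous_id.add continuous_const)).intervalIntegrable _ _
    have := intervalIntegral.integral_mono_on (μ := MeasureTheory.volume)
      (by linarith : (n:ℝ) * θ ≤ n * θ + θ) h1 h2 (fun x _ => hDgrow x)
    calc 2 * J n = ∫ τ in (n*θ)..(n*θ+θ), 2 * ‖D τ‖ := by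
          simp only [hJ_def]; rw [intervalIntegral.integral_const_mul]
    _ ≤ _ := this
  -- J 0 > 0
  have hJ0 : 0 < J 0 := by
    have hD_int : IntervalIntegrable D MeasureTheory.volume 0 θ :=
      hD_cont.intervalIntegrable 0 θ
    have hftc : ∫ τ in (0:ℝ)..θ, D τ = c θ - c 0 :=
      intervalIntegral.integral_eq_sub_of_hasDerivAt (fun x _ => hD x) hD_int
    have hne : c θ ≠ c 0 := by
      intro h
      have : u θ = u 0 := hinj (huA θ) (huA 0) h
      rw [hu_def] at this
      simp only at this
      rw [hθl] at this
      simp only [Complex.ofReal_zero, zero_mul, Complex.exp_zero, mul_one] at this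
      have hsne : (s:ℂ) ≠ 0 := by
        simp only [ne_eq, Complex.ofReal_eq_zero]
        linarith
      exact hl1 (mul_left_cancel₀ hsne (by rw [mul_one]; exact this))
    have hpos : 0 < ‖c θ - c 0‖ := by
      rw [norm_pos_iff]
      exact sub_ne_zero_of_ne hne
    have hle : ‖c θ - c 0‖ ≤ ∫ τ in (0:ℝ)..θ, ‖D τ‖ := by
      rw [← hftc]
      exact intervalIntegral.norm_integral_le_integral_norm hθpos.le
    have : J 0 = ∫ τ in (0:ℝ)..θ, ‖D τ‖ := by simp only [hJ_def]; norm_num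
    rw [this]
    linarith
  -- exponential growth
  have hpow : ∀ n, 2 ^ n * J 0 ≤ J n := by
    intro n
    induction n with
    | zero => simp
    | succ k ih =>
      calc 2 ^ (k+1) * J 0 = 2 * (2 ^ k * J 0) := by ring
      _ ≤ 2 * J k := by linarith
      _ ≤ J (k + 1) := hJgrow k
  obtain ⟨n, hn⟩ : ∃ n : ℕ, B * θ / J 0 < 2 ^ n := pow_unbounded_of_one_lt _ one_lt_two
  have : B * θ < 2 ^ n * J 0 := by
    rwa [div_lt_iff₀ hJ0] at hn
  have h1 := hpow n
  have h2 := hJub n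
  linarith
end
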